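/- arXiv:2202.02150 — 8 statements merged into one kernel-verified Lean document; each statement's English description precedes it below -/
import Mathlib

section
/- In the linear structural equation model with one latent confounder (r = 1), the population regression coefficient of X is the true causal coefficient plus an explicit confounding bias. Precisely: let d, q ≥ 1, σ_x > 0, b, β ∈ ℝ^d, a, γ ∈ ℝ^q, and S ⊆ {1,…,q}. Define the block matrix M = [[b b^⊤ + σ_x² I_d, b a_S^⊤], [a_S b^⊤, a_S a_S^⊤ + I_{|S|}]] ∈ ℝ^{(d+|S|)×(d+|S|)} and the vector c ∈ ℝ^{d+|S|} whose first block is (b b^⊤ + σ_x² I_d) β + b (a^⊤ γ) and whose second block is a_S b^⊤ β + a_S (a^⊤ γ) + γ_S. Then M is invertible and the first d coordinates of M^{-1} c equal β + (a_{S^c}^⊤ γ_{S^c} / (1 + ‖b‖²/σ_x² + ‖a_S‖²)) · (b / σ_x²). -/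
open MeasureTheory Matrix Filter

/-- In the linear SEM with one latent confounder (`r = 1`), the population
regression coefficient of `X` (from regressing `Y` on `(X, W_S)`) equals the true causal
coefficient `β` plus an explicit confounding bias.  `M` is the population covariance matrix
`Var((X, W_S))` and `c` is the cross-covariance `Cov((X, W_S), Y)`. -/
theorem stmt_0 (d q : ℕ) (hd : 1 ≤ d) (hq : 1 ≤ q)
    (σx : ℝ) (hσx : 0 < σx) (b β : Fin d → ℝ) (a γ : Fin q → ℝ)
    (S : Finset (Fin q))
    (M : Matrix (Fin d ⊕ {i // i ∈ S}) (Fin d ⊕ {i // i ∈ S}) ℝ)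
    (hM : M = Matrix.fromBlocks
      (Matrix.vecMulVec b b + σx ^ 2 • (1 : Matrix (Fin d) (Fin d) ℝ))
      (Matrix.vecMulVec b (fun i : {i // i ∈ S} => a i))
      (Matrix.vecMulVec (fun i : {i // i ∈ S} => a i) b)
      (Matrix.vecMulVec (fun i : {i // i ∈ S} => a i) (fun i : {i // i ∈ S} => a i)
        + (1 : Matrix {i // i ∈ S} {i // i ∈ S} ℝ)))
    (c : Fin d ⊕ {i // i ∈ S} → ℝ)
    (hc : c = Sum.elim
      (fun i => ((Matrix.vecMulVec b b + σx ^ 2 • (1 : Matrix (Fin d) (Fin d) ℝ)) *ᵥ β) i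
        + b i * (a ⬝ᵥ γ))
      (fun i : {i // i ∈ S} => a i * (b ⬝ᵥ β) + a i * (a ⬝ᵥ γ) + γ i)) :
    IsUnit M ∧ ∀ i : Fin d,
      (M⁻¹ *ᵥ c) (Sum.inl i) =
        β i + ((∑ k ∈ Sᶜ, a k * γ k) /
          (1 + (∑ k, b k ^ 2) / σx ^ 2 + ∑ k ∈ S, a k ^ 2)) * (b i / σx ^ 2) := by
  have hs : (0:ℝ) < σx ^ 2 := by positivity
  set u : Fin d ⊕ {i // i ∈ S} → ℝ := Sum.elim b (fun i => a i) with hu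
  set w : Fin d ⊕ {i // i ∈ S} → ℝ := Sum.elim (fun _ => σx ^ 2) (fun _ => 1) with hw
  have hM' : M = Matrix.vecMulVec u u + Matrix.diagonal w := by
    subst hM
    ext i j
    rcases i with i | i <;> rcases j with j | j <;>
      simp [Matrix.vecMulVec_apply, Matrix.diagonal_apply, Matrix.one_apply, u, w,
        Sum.inl.injEq, Sum.inr.injEq, eq_comm]
  have hw_pos : ∀ i, 0 < w i := by
    rintro (i | i) <;> simp [w, hs]
  -- quadratic form
  have hquad : ∀ x : Fin d ⊕ {i // i ∈ S} → ℝ,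
      x ⬝ᵥ (M *ᵥ x) = (u ⬝ᵥ x) ^ 2 + ∑ i, w i * x i ^ 2 := by
    intro x
    rw [hM']
    simp only [Matrix.add_mulVec, dotProduct_add]
    have h1 : x ⬝ᵥ (Matrix.vecMulVec u u *ᵥ x) = (u ⬝ᵥ x) ^ 2 := by
      simp only [Matrix.mulVec, dotProduct, Matrix.vecMulVec_apply, Finset.mul_sum]
      rw [sq, Finset.sum_mul_sum]
      refine Finset.sum_congr rfl fun i _ => Finset.sum_congr rfl fun j _ => by ring
    have h2 : x ⬝ᵥ (Matrix.diagonal w *ᵥ x) = ∑ i, w i * x i ^ 2 := by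
      simp only [Matrix.mulVec_diagonal, dotProduct]
      exact Finset.sum_congr rfl fun i _ => by ring
    rw [h1, h2]
  have hdet : IsUnit M.det := by
    rw [isUnit_iff_ne_zero]
    intro h0
    obtain ⟨x, hx0, hx⟩ := (Matrix.exists_mulVec_eq_zero_iff).mpr h0
    have h := hquad x
    rw [hx, dotProduct_zero] at h
    obtain ⟨i, hi⟩ : ∃ i, x i ≠ 0 := Function.ne_iff.mp hx0
    have hsum : 0 < ∑ j, w j * x j ^ 2 := by
      refine Finset.sum_pos' (fun j _ => mul_nonneg (hw_pos j).le (sq_nonneg _))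
        ⟨i, Finset.mem_univ i, mul_pos (hw_pos i) (by positivity)⟩
    nlinarith [sq_nonneg (u ⬝ᵥ x)]
  refine ⟨(Matrix.isUnit_iff_isUnit_det M).mpr hdet, ?_⟩
  set B : ℝ := ∑ k, b k ^ 2 with hB
  set A : ℝ := ∑ k ∈ S, a k ^ 2 with hA
  set G : ℝ := ∑ k ∈ S, a k * γ k with hG
  set T : ℝ := ∑ k ∈ Sᶜ, a k * γ k with hT
  have hBnn : 0 ≤ B := Finset.sum_nonneg fun k _ => sq_nonneg _
  have hAnn : 0 ≤ A := Finset.sum_nonneg fun k _ => sq_nonneg _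
  set D : ℝ := 1 + B / σx ^ 2 + A with hD
  have hDpos : 0 < D := by rw [hD]; positivity
  set mu : ℝ := T / D with hmu
  set lam : ℝ := mu / σx ^ 2 with hlam
  set v : Fin d ⊕ {i // i ∈ S} → ℝ :=
    Sum.elim (fun i => β i + lam * b i) (fun i => γ i + mu * a i) with hv
  have hsubA : ∑ i : {i // i ∈ S}, a (i : Fin q) ^ 2 = A := by
    rw [hA]; exact Finset.sum_coe_sort S (fun k => a k ^ 2)
  have hsubG : ∑ i : {i // i ∈ S}, a (i : Fin q) * γ (i : Fin q) = G := by
    rw [hG]; exact Finset.sum_coe_sort S (fun k => a k * γ k)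
  have haγ : a ⬝ᵥ γ = G + T := by
    rw [dotProduct, hG, hT, Finset.sum_add_sum_compl]
  have hmuD : mu * D = T := by
    rw [hmu]; field_simp
  have hkey : lam * B + G + mu * A + lam * σx ^ 2 = G + T := by
    have h1 : lam * B + mu * A + lam * σx ^ 2 = mu * D := by
      rw [hlam, hD]; field_simp; ring
    linarith [hmuD]
  have hkey2 : lam * B + G + mu * A + mu = G + T := by
    have h1 : lam * B + mu * A + mu = mu * D := by
      rw [hlam, hD]; field_simp; ring
    linarith [hmuD]
  have huv : u ⬝ᵥ v = (b ⬝ᵥ β) + lam * B + G + mu * A := by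
    have e1 : ∑ x, b x * (β x + lam * b x) = (∑ k, b k * β k) + lam * B := by
      rw [hB, Finset.mul_sum, ← Finset.sum_add_distrib]
      exact Finset.sum_congr rfl fun k _ => by ring
    have e2 : ∑ x : {i // i ∈ S}, a (x : Fin q) * (γ (x : Fin q) + mu * a (x : Fin q))
        = G + mu * A := by
      rw [← hsubG, ← hsubA, Finset.mul_sum, ← Finset.sum_add_distrib]
      exact Finset.sum_congr rfl fun k _ => by ring
    simp only [dotProduct, hu, hv, Fintype.sum_sum_type, Sum.elim_inl, Sum.elim_inr]
    rw [e1, e2]; ring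
  have hMv : M *ᵥ v = c := by
    rw [hM', hc]
    ext i
    rcases i with i | i
    · have h1 : (Matrix.vecMulVec u u *ᵥ v) (Sum.inl i) = b i * (u ⬝ᵥ v) := by
        simp [Matrix.mulVec, Matrix.vecMulVec_apply, dotProduct, hu,
          Fintype.sum_sum_type, mul_add, Finset.mul_sum, mul_assoc]
      have h2 : (Matrix.vecMulVec b b *ᵥ β) i = b i * (b ⬝ᵥ β) := by
        simp [Matrix.mulVec, Matrix.vecMulVec_apply, dotProduct, Finset.mul_sum,
          mul_assoc]
      simp only [Matrix.add_mulVec, Pi.add_apply, Matrix.mulVec_diagonal, Sum.elim_inl,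
        Matrix.smul_mulVec, Pi.smul_apply, Matrix.one_mulVec, smul_eq_mul]
      rw [h1, h2, huv, haγ]
      simp only [hv, hw, Sum.elim_inl]
      linear_combination (b i) * hkey
    · have h1 : (Matrix.vecMulVec u u *ᵥ v) (Sum.inr i) = a (i : Fin q) * (u ⬝ᵥ v) := by
        simp [Matrix.mulVec, Matrix.vecMulVec_apply, dotProduct, hu,
          Fintype.sum_sum_type, mul_add, Finset.mul_sum, mul_assoc]
      simp only [Matrix.add_mulVec, Pi.add_apply, Matrix.mulVec_diagonal, Sum.elim_inr]
      rw [h1, huv, haγ]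
      simp only [hv, hw, Sum.elim_inr]
      linear_combination (a (i : Fin q)) * hkey2
  have hinv : M⁻¹ *ᵥ c = v := by
    rw [← hMv, Matrix.mulVec_mulVec, Matrix.nonsing_inv_mul M hdet, Matrix.one_mulVec]
  intro i
  rw [hinv]
  simp only [hv, Sum.elim_inl, hlam, hmu]
  ring
end

section
/- Fix m ≥ 2, d ≥ 1, q ≥ 1, a symmetric positive semidefinite matrix Σ ∈ ℝ^{m×m}, and a nonzero vector u ∈ ℝ^d. For each n, let β_n ∈ ℝ^d with β_n ≠ 0, let ρ_n > 0, let v^{(n)} be a multivariate Gaussian random vector on ℝ^m with mean 0 and covariance (ρ_n²/q) Σ, and set β̂_j^{(n)} = β_n + v_j^{(n)} u for j = 1,…,m. If ρ_n / ‖β_n‖ → 0 as n → ∞, then E[𝒱(β̂_1^{(n)},…,β̂_m^{(n)})] → 0 as n → ∞. -/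
open MeasureTheory Matrix Filter

/-- Cramér–Wold characterization of the multivariate Gaussian law. -/
def IsGaussianVec {n : ℕ} (μ : Measure (Fin n → ℝ)) (mean : Fin n → ℝ)
    (cov : Matrix (Fin n) (Fin n) ℝ) : Prop :=
  ∀ u : Fin n → ℝ,
    μ.map (fun x => u ⬝ᵥ x) =
      ProbabilityTheory.gaussianReal (u ⬝ᵥ mean) (u ⬝ᵥ (cov *ᵥ u)).toNNReal

/-- The stability statistic `𝒱(v_1, …, v_m) = 1 - ‖m⁻¹ ∑ v_j‖² / (m⁻¹ ∑ ‖v_j‖²)`. -/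
noncomputable def Vstat {m d : ℕ} (v : Fin m → Fin d → ℝ) : ℝ :=
  1 - (∑ i, ((m : ℝ)⁻¹ * ∑ j, v j i) ^ 2) / ((m : ℝ)⁻¹ * ∑ j, ∑ i, v j i ^ 2)

section GaussAux
open ProbabilityTheory
open scoped Real NNReal

lemma integrable_sq_gaussianReal_one :
    Integrable (fun y : ℝ => y ^ 2) (gaussianReal 0 1) := by
  rw [gaussianReal_of_var_ne_zero 0 one_ne_zero,
    integrable_withDensity_iff (measurable_gaussianPDF 0 1)
      (ae_of_all _ fun x => ENNReal.ofReal_lt_top)]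
  have : (fun y : ℝ => y ^ 2 * (gaussianPDF 0 1 y).toReal)
      = fun y : ℝ => (√(2 * π * 1))⁻¹ * (y ^ 2 * Real.exp (-(2⁻¹ : ℝ) * y ^ 2)) := by
    ext y
    rw [gaussianPDF, ENNReal.toReal_ofReal (gaussianPDFReal_nonneg _ _ _), gaussianPDFReal]
    push_cast
    ring_nf
  rw [this]
  refine Integrable.const_mul ?_ _
  have h := integrable_rpow_mul_exp_neg_mul_sq (b := 2⁻¹) (by norm_num) (s := 2) (by norm_num)
  have h2 : (fun x : ℝ => x ^ (2 : ℝ) * Real.exp (-2⁻¹ * x ^ 2))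
      = fun x : ℝ => x ^ 2 * Real.exp (-2⁻¹ * x ^ 2) := by
    ext x
    rw [show ((2:ℝ)) = ((2:ℕ):ℝ) by norm_num, Real.rpow_natCast]
  rw [h2] at h
  convert h using 2 with x

lemma gaussianReal_eq_map (v : ℝ≥0) :
    gaussianReal 0 v = (gaussianReal 0 1).map (fun y => Real.sqrt v * y) := by
  rw [gaussianReal_map_const_mul]
  congr 1
  · simp
  · ext
    simp [Real.sq_sqrt (NNReal.coe_nonneg v)]

lemma integrable_sq_gaussianReal (v : ℝ≥0) :
    Integrable (fun y : ℝ => y ^ 2) (gaussianReal 0 v) := by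
  rw [gaussianReal_eq_map,
    integrable_map_measure (by fun_prop) (by fun_prop)]
  have : ((fun y : ℝ => y ^ 2) ∘ fun y => Real.sqrt v * y)
      = fun y : ℝ => (Real.sqrt v) ^ 2 * y ^ 2 := by ext y; simp [Function.comp, mul_pow]
  rw [this]
  exact integrable_sq_gaussianReal_one.const_mul _

lemma integral_sq_gaussianReal (v : ℝ≥0) :
    ∫ y, y ^ 2 ∂(gaussianReal 0 v) = (v : ℝ) * ∫ y, y ^ 2 ∂(gaussianReal 0 1) := by
  rw [gaussianReal_eq_map, integral_map (by fun_prop) (by fun_prop)]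
  have : (fun y : ℝ => (Real.sqrt v * y) ^ 2) = fun y : ℝ => (v : ℝ) * y ^ 2 := by
    ext y; rw [mul_pow, Real.sq_sqrt (NNReal.coe_nonneg v)]
  rw [this, integral_const_mul]

end GaussAux

section VstatAux

lemma Vstat_le_one {m d : ℕ} (v : Fin m → Fin d → ℝ) : Vstat v ≤ 1 := by
  unfold Vstat
  have h1 : (0:ℝ) ≤ ∑ i, ((m : ℝ)⁻¹ * ∑ j, v j i) ^ 2 :=
    Finset.sum_nonneg fun i _ => sq_nonneg _
  have h2 : (0:ℝ) ≤ (m : ℝ)⁻¹ * ∑ j, ∑ i, v j i ^ 2 := by positivity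
  nlinarith [div_nonneg h1 h2]

lemma Vstat_nonneg {m d : ℕ} (v : Fin m → Fin d → ℝ) : 0 ≤ Vstat v := by
  unfold Vstat
  have key : ∑ i, ((m : ℝ)⁻¹ * ∑ j, v j i) ^ 2 ≤ (m : ℝ)⁻¹ * ∑ j, ∑ i, v j i ^ 2 := by
    have hswap : (m : ℝ)⁻¹ * ∑ j, ∑ i, v j i ^ 2 = ∑ i, (m:ℝ)⁻¹ * ∑ j, v j i ^ 2 := by
      rw [Finset.sum_comm, Finset.mul_sum]
    rw [hswap]
    refine Finset.sum_le_sum fun i _ => ?_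
    have hcs : (∑ j, v j i) ^ 2 ≤ (m:ℝ) * ∑ j, v j i ^ 2 := by
      have := sq_sum_le_card_mul_sum_sq (s := Finset.univ) (f := fun j => v j i)
      simpa using this
    rcases Nat.eq_zero_or_pos m with hm | hm
    · subst hm; simp
    · have hm' : (0:ℝ) < m := by exact_mod_cast hm
      rw [mul_pow]
      rw [show ((m:ℝ)⁻¹)^2 = (m:ℝ)⁻¹ * (m:ℝ)⁻¹ by ring, mul_assoc]
      refine mul_le_mul_of_nonneg_left ?_ (by positivity)
      calc (m:ℝ)⁻¹ * (∑ j, v j i) ^ 2 ≤ (m:ℝ)⁻¹ * ((m:ℝ) * ∑ j, v j i ^ 2) :=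
            mul_le_mul_of_nonneg_left hcs (by positivity)
        _ = ∑ j, v j i ^ 2 := by field_simp
  have h2 : (0:ℝ) ≤ (m : ℝ)⁻¹ * ∑ j, ∑ i, v j i ^ 2 := by positivity
  have := div_le_one_of_le₀ key h2
  linarith

lemma aux_quad {nb nu ip c : ℝ} (hnb : 0 < nb) (hnu : 0 ≤ nu)
    (h1 : ip ^ 2 ≤ nb * nu) (h2 : c ^ 2 * nu ≤ nb / 4) :
    nb / 4 ≤ nb + 2 * c * ip + c ^ 2 * nu := by
  rcases hnu.eq_or_lt with h | h
  · have hip : ip = 0 := by nlinarith [sq_nonneg ip]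
    rw [hip, ← h]; ring_nf; nlinarith
  · nlinarith [sq_nonneg (2 * nu * c + ip), mul_pos h h, sq_nonneg c, sq_nonneg ip,
      mul_le_mul_of_nonneg_left h2 h.le]

lemma Vstat_le_bound {m d : ℕ} (hm : 1 ≤ m) (β u : Fin d → ℝ) (hβ : β ≠ 0) (x : Fin m → ℝ) :
    Vstat (fun j i => β i + x j * u i) ≤
      4 * (∑ i, u i ^ 2) * (∑ j, x j ^ 2) / (∑ i, β i ^ 2) := by
  set nb := ∑ i, β i ^ 2 with hnbdef
  set nu := ∑ i, u i ^ 2 with hnudef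
  set S := ∑ j, x j ^ 2 with hSdef
  have hnb : 0 < nb := by
    obtain ⟨i, hi⟩ := Function.ne_iff.mp hβ
    exact Finset.sum_pos' (fun i _ => sq_nonneg _)
      ⟨i, Finset.mem_univ i, (sq_nonneg _).lt_of_ne (Ne.symm (pow_ne_zero 2 hi))⟩
  have hnu : 0 ≤ nu := Finset.sum_nonneg fun i _ => sq_nonneg _
  have hS : 0 ≤ S := Finset.sum_nonneg fun j _ => sq_nonneg _
  rcases le_or_gt nb (4 * nu * S) with h | h
  · calc Vstat (fun j i => β i + x j * u i) ≤ 1 := Vstat_le_one _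
      _ ≤ 4 * nu * S / nb := (one_le_div hnb).mpr h
  · -- small-noise case
    set ip := ∑ i, β i * u i with hipdef
    have hcs : ip ^ 2 ≤ nb * nu := Finset.sum_mul_sq_le_sq_mul_sq _ _ _
    have hm' : (0:ℝ) < m := by exact_mod_cast hm
    have hexp : ∀ c : ℝ, ∑ i, (β i + c * u i) ^ 2 = nb + 2 * c * ip + c ^ 2 * nu := by
      intro c
      rw [hnbdef, hnudef, hipdef, Finset.mul_sum, Finset.mul_sum, ← Finset.sum_add_distrib,
        ← Finset.sum_add_distrib]
      exact Finset.sum_congr rfl fun i _ => by ring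
    set xb := (m:ℝ)⁻¹ * ∑ j, x j with hxbdef
    -- numerator
    have hN : ∑ i, ((m : ℝ)⁻¹ * ∑ j, (β i + x j * u i)) ^ 2
        = nb + 2 * xb * ip + xb ^ 2 * nu := by
      have : ∀ i, (m : ℝ)⁻¹ * ∑ j, (β i + x j * u i) = β i + xb * u i := by
        intro i
        rw [Finset.sum_add_distrib, ← Finset.sum_mul, hxbdef]
        field_simp
        rw [Finset.sum_const, Finset.card_univ, Fintype.card_fin, nsmul_eq_mul]
      simp_rw [this]
      exact hexp xb
    -- denominator
    have hB : (m : ℝ)⁻¹ * ∑ j, ∑ i, (β i + x j * u i) ^ 2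
        = nb + 2 * xb * ip + ((m:ℝ)⁻¹ * S) * nu := by
      simp_rw [hexp]
      rw [Finset.sum_add_distrib, Finset.sum_add_distrib, Finset.sum_const, Finset.card_univ,
        Fintype.card_fin, nsmul_eq_mul]
      rw [hxbdef, hSdef]
      rw [← Finset.sum_mul, ← Finset.mul_sum, ← Finset.sum_mul]
      field_simp
    -- each term of the denominator is at least nb/4
    have hterm : ∀ j, nb / 4 ≤ ∑ i, (β i + x j * u i) ^ 2 := by
      intro j
      rw [hexp (x j)]
      refine aux_quad hnb hnu hcs ?_
      have hxj : (x j) ^ 2 ≤ S := Finset.single_le_sum (fun j _ => sq_nonneg (x j))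
        (Finset.mem_univ j)
      nlinarith
    have hBge : nb / 4 ≤ (m : ℝ)⁻¹ * ∑ j, ∑ i, (β i + x j * u i) ^ 2 := by
      have : (m:ℝ) * (nb / 4) ≤ ∑ j, ∑ i, (β i + x j * u i) ^ 2 := by
        calc (m:ℝ) * (nb / 4) = ∑ _j : Fin m, nb / 4 := by
              rw [Finset.sum_const, Finset.card_univ, Fintype.card_fin, nsmul_eq_mul]
          _ ≤ _ := Finset.sum_le_sum fun j _ => hterm j
      calc nb / 4 = (m:ℝ)⁻¹ * ((m:ℝ) * (nb / 4)) := by field_simp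
        _ ≤ _ := mul_le_mul_of_nonneg_left this (by positivity)
    -- variance bound
    have hxbsq : xb ^ 2 ≤ (m:ℝ)⁻¹ * S := by
      have hcs2 : (∑ j, x j) ^ 2 ≤ (m:ℝ) * S := by
        have := sq_sum_le_card_mul_sum_sq (s := Finset.univ) (f := x)
        simpa [hSdef] using this
      rw [hxbdef, mul_pow]
      calc ((m:ℝ)⁻¹) ^ 2 * (∑ j, x j) ^ 2 ≤ ((m:ℝ)⁻¹) ^ 2 * ((m:ℝ) * S) :=
            mul_le_mul_of_nonneg_left hcs2 (by positivity)
        _ = (m:ℝ)⁻¹ * S := by field_simp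
    set B := (m : ℝ)⁻¹ * ∑ j, ∑ i, (β i + x j * u i) ^ 2 with hBdef
    set N := ∑ i, ((m : ℝ)⁻¹ * ∑ j, (β i + x j * u i)) ^ 2 with hNdef
    have hBpos : 0 < B := lt_of_lt_of_le (by positivity) hBge
    have hVeq : Vstat (fun j i => β i + x j * u i) = (B - N) / B := by
      unfold Vstat
      rw [← hBdef, ← hNdef, sub_div, div_self hBpos.ne']
    rw [hVeq]
    have hBN : B - N ≤ nu * S := by
      rw [hB, hN]
      have h1 : ((m:ℝ)⁻¹ * S) * nu - xb ^ 2 * nu ≤ ((m:ℝ)⁻¹ * S) * nu := by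
        nlinarith [sq_nonneg xb]
      have hminv : (m:ℝ)⁻¹ ≤ 1 := by
        rw [inv_le_one_iff₀]; right; exact_mod_cast hm
      have h3 : (m:ℝ)⁻¹ * S ≤ S := by nlinarith
      have h2 : ((m:ℝ)⁻¹ * S) * nu ≤ nu * S := by
        calc ((m:ℝ)⁻¹ * S) * nu ≤ S * nu := mul_le_mul_of_nonneg_right h3 hnu
          _ = nu * S := mul_comm _ _
      linarith
    calc (B - N) / B ≤ (nu * S) / (nb / 4) := by
          apply div_le_div₀ (by positivity) hBN (by positivity) hBge
      _ = 4 * nu * S / nb := by rw [div_div_eq_mul_div]; ring_nf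

end VstatAux

set_option maxHeartbeats 1000000 in
/-- if `β̂_j⁽ⁿ⁾ = β_n + v_j⁽ⁿ⁾ u` with `v⁽ⁿ⁾ ~ N(0, (ρ_n²/q) Σ)`, `β_n ≠ 0`,
and `ρ_n/‖β_n‖ → 0`, then `E[𝒱(β̂₁⁽ⁿ⁾, …, β̂_m⁽ⁿ⁾)] → 0`. -/
theorem stmt_3 (m d q : ℕ) (hm : 2 ≤ m) (hd : 1 ≤ d) (hq : 1 ≤ q)
    (Sgm : Matrix (Fin m) (Fin m) ℝ) (hSgm : Sgm.PosSemidef)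
    (u : Fin d → ℝ) (hu : u ≠ 0)
    (β : ℕ → Fin d → ℝ) (hβ : ∀ n, β n ≠ 0)
    (ρ : ℕ → ℝ) (hρ : ∀ n, 0 < ρ n)
    (μ : ℕ → Measure (Fin m → ℝ)) (hprob : ∀ n, IsProbabilityMeasure (μ n))
    (hgauss : ∀ n, IsGaussianVec (μ n) 0 ((ρ n ^ 2 / q) • Sgm))
    (hratio : Tendsto (fun n => ρ n / Real.sqrt (∑ i, β n i ^ 2)) atTop (nhds 0)) :
    Tendsto (fun n => ∫ x, Vstat (fun j i => β n i + x j * u i) ∂(μ n)) atTop (nhds 0) := by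
  classical
  have hm1 : 1 ≤ m := le_trans (by norm_num) hm
  set nu := ∑ i, u i ^ 2 with hnudef
  set M := ∫ y, y ^ 2 ∂(ProbabilityTheory.gaussianReal 0 1) with hMdef
  have hM0 : 0 ≤ M := integral_nonneg fun y => sq_nonneg y
  have hq' : (0:ℝ) < q := by exact_mod_cast hq
  have hdiag : ∀ j, 0 ≤ Sgm j j := by
    intro j
    exact hSgm.diag_nonneg
  set K := ∑ j, Sgm j j with hKdef
  have hK0 : 0 ≤ K := Finset.sum_nonneg fun j _ => hdiag j
  have hnu0 : 0 ≤ nu := Finset.sum_nonneg fun i _ => sq_nonneg _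
  set nb : ℕ → ℝ := fun n => ∑ i, β n i ^ 2 with hnbdef
  have hnb : ∀ n, 0 < nb n := by
    intro n
    obtain ⟨i, hi⟩ := Function.ne_iff.mp (hβ n)
    exact Finset.sum_pos' (fun i _ => sq_nonneg _)
      ⟨i, Finset.mem_univ i, (sq_nonneg _).lt_of_ne (Ne.symm (pow_ne_zero 2 hi))⟩
  -- law of each coordinate
  have hmap : ∀ n (j : Fin m), (μ n).map (fun x => x j)
      = ProbabilityTheory.gaussianReal 0 ((ρ n ^ 2 / q * Sgm j j).toNNReal) := by
    intro n j
    have h := hgauss n (Pi.single j 1)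
    have h1 : (fun x : Fin m → ℝ => (Pi.single j 1 : Fin m → ℝ) ⬝ᵥ x) = fun x => x j := by
      ext x; simp [dotProduct, Pi.single_apply]
    have h2 : (Pi.single j 1 : Fin m → ℝ) ⬝ᵥ (0 : Fin m → ℝ) = 0 := by
      simp [dotProduct]
    have h3 : (Pi.single j 1 : Fin m → ℝ) ⬝ᵥ (((ρ n ^ 2 / q) • Sgm) *ᵥ Pi.single j 1)
        = ρ n ^ 2 / q * Sgm j j := by
      simp [dotProduct, mulVec, Pi.single_apply, Finset.mul_sum, mul_comm]
    rw [h1, h2, h3] at h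
    exact h
  have hintj : ∀ n (j : Fin m), Integrable (fun x : Fin m → ℝ => (x j) ^ 2) (μ n) := by
    intro n j
    have h := integrable_sq_gaussianReal ((ρ n ^ 2 / q * Sgm j j).toNNReal)
    rw [← hmap n j, integrable_map_measure (by fun_prop : AEStronglyMeasurable (fun y : ℝ => y ^ 2) _)
      (measurable_pi_apply j).aemeasurable] at h
    simpa [Function.comp_def] using h
  have hvalj : ∀ n (j : Fin m), ∫ x, (x j) ^ 2 ∂(μ n) = (ρ n ^ 2 / q * Sgm j j) * M := by
    intro n j
    have h : ∫ y, y ^ 2 ∂((μ n).map (fun x => x j))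
        = ((ρ n ^ 2 / q * Sgm j j).toNNReal : ℝ) * M := by
      rw [hmap n j]; exact integral_sq_gaussianReal _
    rw [integral_map (measurable_pi_apply j).aemeasurable
      (by fun_prop : AEStronglyMeasurable (fun y : ℝ => y ^ 2) _)] at h
    rw [h, Real.coe_toNNReal]
    exact mul_nonneg (by positivity) (hdiag j)
  -- integrability of the sum of squares
  have hintS : ∀ n, Integrable (fun x : Fin m → ℝ => ∑ j, (x j) ^ 2) (μ n) := fun n =>
    integrable_finset_sum _ fun j _ => hintj n j
  have hvalS : ∀ n, ∫ x : Fin m → ℝ, (∑ j, (x j) ^ 2) ∂(μ n) = (ρ n ^ 2 / q * K) * M := by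
    intro n
    rw [integral_finset_sum _ fun j _ => hintj n j]
    simp_rw [hvalj]
    rw [hKdef, ← Finset.sum_mul, Finset.mul_sum]
  -- integrability of the bound & of Vstat
  have hintg : ∀ n, Integrable
      (fun x : Fin m → ℝ => 4 * nu * (∑ j, (x j) ^ 2) / nb n) (μ n) := by
    intro n
    have := (hintS n).const_mul (4 * nu / nb n)
    refine this.congr (ae_of_all _ fun x => ?_)
    ring
  have hmeasV : ∀ n, Measurable
      (fun x : Fin m → ℝ => Vstat (fun j i => β n i + x j * u i)) := by
    intro n
    unfold Vstat
    fun_prop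
  have hboundV : ∀ n (x : Fin m → ℝ), Vstat (fun j i => β n i + x j * u i)
      ≤ 4 * nu * (∑ j, (x j) ^ 2) / nb n := fun n x =>
    Vstat_le_bound hm1 (β n) u (hβ n) x
  have hintV : ∀ n, Integrable
      (fun x : Fin m → ℝ => Vstat (fun j i => β n i + x j * u i)) (μ n) := by
    intro n
    refine (hintg n).mono' ((hmeasV n).aestronglyMeasurable) (ae_of_all _ fun x => ?_)
    rw [Real.norm_eq_abs, abs_of_nonneg (Vstat_nonneg _)]
    exact hboundV n x
  -- squeeze
  have hlow : ∀ n, 0 ≤ ∫ x, Vstat (fun j i => β n i + x j * u i) ∂(μ n) := fun n =>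
    integral_nonneg fun x => Vstat_nonneg _
  have hupper : ∀ n, ∫ x, Vstat (fun j i => β n i + x j * u i) ∂(μ n)
      ≤ (ρ n / Real.sqrt (nb n)) ^ 2 * (4 * nu * K * M / q) := by
    intro n
    have h1 : ∫ x, Vstat (fun j i => β n i + x j * u i) ∂(μ n)
        ≤ ∫ x, 4 * nu * (∑ j, (x j) ^ 2) / nb n ∂(μ n) :=
      integral_mono (hintV n) (hintg n) (fun x => hboundV n x)
    have h2 : ∫ x, 4 * nu * (∑ j, (x j) ^ 2) / nb n ∂(μ n)
        = (4 * nu / nb n) * ((ρ n ^ 2 / q * K) * M) := by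
      have : (fun x : Fin m → ℝ => 4 * nu * (∑ j, (x j) ^ 2) / nb n)
          = fun x : Fin m → ℝ => (4 * nu / nb n) * (∑ j, (x j) ^ 2) := by
        ext x; ring
      rw [this, integral_const_mul, hvalS n]
    have h3 : (4 * nu / nb n) * ((ρ n ^ 2 / q * K) * M)
        = (ρ n / Real.sqrt (nb n)) ^ 2 * (4 * nu * K * M / q) := by
      rw [div_pow, Real.sq_sqrt (hnb n).le]
      field_simp
    rw [h2, h3] at h1
    exact h1
  refine tendsto_of_tendsto_of_tendsto_of_le_of_le tendsto_const_nhds ?_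
    hlow hupper
  have h0 : Tendsto (fun n => (ρ n / Real.sqrt (nb n)) ^ 2) atTop (nhds 0) := by
    have := hratio.mul hratio
    rw [mul_zero] at this
    refine this.congr fun n => ?_
    rw [sq]
  have := h0.mul_const (4 * nu * K * M / q)
  rw [zero_mul] at this
  exact this
end

section
/- Fix m ≥ 2, d ≥ 1, ρ_γ > 0, a nonzero vector u ∈ ℝ^d, and β ∈ ℝ^d. For each q ≥ 1, let Σ^{(q)} ∈ ℝ^{m×m} be symmetric positive semidefinite with tr(Σ^{(q)})/(m q) → 0 as q → ∞, let v^{(q)} be a multivariate Gaussian random vector on ℝ^m with mean 0 and covariance (ρ_γ²/q) Σ^{(q)}, and set β̂_j^{(q)} = β + v_j^{(q)} u. Then, as q → ∞: (i) m^{-1} ∑_{j=1}^m β̂_j^{(q)} converges in probability to β; and (ii) if β ≠ 0, the stability statistic 𝒱(β̂_1^{(q)},…,β̂_m^{(q)}) converges in probability to 0. -/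
open MeasureTheory Matrix Filter

section Aux
open ProbabilityTheory NNReal

lemma gauss_tail_nat :
    Tendsto (fun n : ℕ => gaussianReal 0 1 {x : ℝ | (n : ℝ) ≤ |x|}) atTop (nhds 0) := by
  have hmeas : ∀ n : ℕ, MeasurableSet {x : ℝ | (n : ℝ) ≤ |x|} := fun n =>
    measurableSet_le measurable_const measurable_abs
  have hanti : Antitone (fun n : ℕ => {x : ℝ | (n : ℝ) ≤ |x|}) := by
    intro a b hab x hx
    have h' : (a:ℝ) ≤ b := Nat.cast_le.mpr hab
    exact le_trans h' hx
  have h := tendsto_measure_iInter_atTop (μ := gaussianReal 0 1)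
    (fun n => (hmeas n).nullMeasurableSet) hanti ⟨0, measure_ne_top _ _⟩
  have hempty : ⋂ n : ℕ, {x : ℝ | (n : ℝ) ≤ |x|} = ∅ := by
    ext x
    simp only [Set.mem_iInter, Set.mem_setOf_eq, Set.mem_empty_iff_false, iff_false, not_forall]
    obtain ⟨n, hn⟩ := exists_nat_gt |x|
    exact ⟨n, not_le.mpr hn⟩
  rw [hempty] at h
  rw [measure_empty] at h
  exact h

lemma gauss_small_var {w : ℕ → ℝ≥0} (hw : Tendsto (fun q => (w q : ℝ)) atTop (nhds 0))
    {δ : ℝ} (hδ : 0 < δ) :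
    Tendsto (fun q => gaussianReal 0 (w q) {y : ℝ | δ ≤ |y|}) atTop (nhds 0) := by
  have hmeas : MeasurableSet {y : ℝ | δ ≤ |y|} :=
    measurableSet_le measurable_const measurable_abs
  rw [ENNReal.tendsto_nhds_zero]
  intro ε hε
  obtain ⟨N, hN, hN1⟩ :=
    ((ENNReal.tendsto_nhds_zero.mp gauss_tail_nat ε hε).and (eventually_ge_atTop 1)).exists
  have hNpos : (0:ℝ) < N := by exact_mod_cast hN1
  have hpos : (0:ℝ) < (δ / N) ^ 2 := by positivity
  filter_upwards [hw.eventually_lt_const hpos] with q hq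
  by_cases hw0 : w q = 0
  · rw [hw0, gaussianReal_zero_var, Measure.dirac_apply' _ hmeas]
    simp [hδ.not_ge]
  · set c : ℝ := Real.sqrt (w q) with hc
    have hc0 : 0 < c := Real.sqrt_pos.mpr (by exact_mod_cast pos_iff_ne_zero.mpr hw0)
    have hmap : gaussianReal 0 (w q) = (gaussianReal 0 1).map (c * ·) := by
      rw [gaussianReal_map_const_mul]
      congr 1
      · simp
      · rw [mul_one]
        ext
        simp [hc, Real.sq_sqrt (w q).2]
    rw [hmap, Measure.map_apply (measurable_const_mul c) hmeas]
    refine le_trans (measure_mono ?_) hN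
    intro x hx
    simp only [Set.mem_preimage, Set.mem_setOf_eq] at hx ⊢
    have hxabs : δ / c ≤ |x| := by
      rw [div_le_iff₀ hc0]
      calc δ ≤ |c * x| := hx
        _ = c * |x| := by rw [abs_mul, abs_of_pos hc0]
        _ = |x| * c := mul_comm _ _
    have hcN : c < δ / N := by
      have := Real.sqrt_lt_sqrt (w q).2 hq
      rwa [Real.sqrt_sq (by positivity)] at this
    have : (N : ℝ) ≤ δ / c := by
      rw [le_div_iff₀ hc0]
      have h2 : c * N < δ := (lt_div_iff₀ hNpos).mp hcN
      nlinarith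
    linarith

lemma exists_delta {m : ℕ} {g : (Fin m → ℝ) → ℝ} (hg : ContinuousAt g 0) (hg0 : g 0 = 0)
    {ε : ℝ} (hε : 0 < ε) : ∃ δ > 0, ∀ x, ε ≤ |g x| → ∃ j, δ ≤ |x j| := by
  obtain ⟨δ, hδ, h⟩ := Metric.continuousAt_iff.mp hg ε hε
  refine ⟨δ, hδ, fun x hx => ?_⟩
  by_contra hc
  push_neg at hc
  have hd : dist x 0 < δ := (dist_pi_lt_iff hδ).mpr fun j => by
    simpa [Real.dist_eq] using hc j
  have h2 := h hd
  rw [hg0, Real.dist_eq, sub_zero] at h2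
  exact absurd hx (not_le.mpr h2)

end Aux

/-- with `β̂_j⁽q⁾ = β + v_j⁽q⁾ u`, `v⁽q⁾ ~ N(0, (ρ_γ²/q) Σ⁽q⁾)` and
`tr(Σ⁽q⁾)/(mq) → 0`: (i) `m⁻¹ ∑_j β̂_j⁽q⁾ → β` in probability, and (ii) if `β ≠ 0`, the
stability statistic `𝒱(β̂₁⁽q⁾, …, β̂_m⁽q⁾) → 0` in probability, as `q → ∞`. -/
theorem stmt_4 (m d : ℕ) (hm : 2 ≤ m) (hd : 1 ≤ d)
    (ργ : ℝ) (hργ : 0 < ργ) (u : Fin d → ℝ) (hu : u ≠ 0) (β : Fin d → ℝ)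
    (Sgm : ℕ → Matrix (Fin m) (Fin m) ℝ) (hpsd : ∀ q, 1 ≤ q → (Sgm q).PosSemidef)
    (htr : Tendsto (fun q : ℕ => (Sgm q).trace / (m * q)) atTop (nhds 0))
    (μ : ℕ → Measure (Fin m → ℝ)) (hprob : ∀ q, IsProbabilityMeasure (μ q))
    (hgauss : ∀ q, 1 ≤ q → IsGaussianVec (μ q) 0 ((ργ ^ 2 / q) • Sgm q)) :
    (∀ ε > (0 : ℝ), Tendsto (fun q : ℕ =>
        μ q {x | ε ≤ Real.sqrt (∑ i,
          ((m : ℝ)⁻¹ * (∑ j, (β i + x j * u i)) - β i) ^ 2)}) atTop (nhds 0))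
    ∧ (β ≠ 0 → ∀ ε > (0 : ℝ), Tendsto (fun q : ℕ =>
        μ q {x | ε ≤ |Vstat (fun j i => β i + x j * u i)|}) atTop (nhds 0)) := by
  have hm0 : (m : ℝ) ≠ 0 := Nat.cast_ne_zero.mpr (by omega)
  -- coordinates tend to 0 in probability
  have hcoord : ∀ δ : ℝ, 0 < δ → ∀ j : Fin m,
      Tendsto (fun q => μ q {x | δ ≤ |x j|}) atTop (nhds 0) := by
    intro δ hδ j
    set w : ℕ → NNReal := fun q => Real.toNNReal (ργ ^ 2 / q * Sgm q j j) with hwdef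
    have hdiagnn : ∀ q : ℕ, 1 ≤ q → ∀ i : Fin m, 0 ≤ Sgm q i i := by
      intro q hq i
      exact (hpsd q hq).diag_nonneg
    have hwto : Tendsto (fun q => (w q : ℝ)) atTop (nhds 0) := by
      have hub : Tendsto (fun q : ℕ => ργ ^ 2 * m * ((Sgm q).trace / (m * q)))
          atTop (nhds 0) := by
        simpa using htr.const_mul (ργ ^ 2 * m)
      have key : Tendsto (fun q : ℕ => ργ ^ 2 / q * Sgm q j j) atTop (nhds 0) := by
        apply tendsto_of_tendsto_of_tendsto_of_le_of_le' tendsto_const_nhds hub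
        · filter_upwards [eventually_ge_atTop 1] with q hq
          have hq0 : (0:ℝ) < q := by exact_mod_cast hq
          have := hdiagnn q hq j
          positivity
        · filter_upwards [eventually_ge_atTop 1] with q hq
          have hq0 : (0:ℝ) < q := by exact_mod_cast hq
          have hdiag : Sgm q j j ≤ (Sgm q).trace := by
            rw [Matrix.trace]
            have : Sgm q j j = (Sgm q).diag j := rfl
            rw [this]
            refine Finset.single_le_sum (fun i _ => ?_) (Finset.mem_univ j)
            exact hdiagnn q hq i
          have heq : ργ ^ 2 * m * ((Sgm q).trace / (m * q)) = ργ ^ 2 / q * (Sgm q).trace := by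
            field_simp
          rw [heq]
          exact mul_le_mul_of_nonneg_left hdiag (by positivity)
      have := key.max (tendsto_const_nhds (x := (0:ℝ)))
      simpa [hwdef, Real.coe_toNNReal'] using this
    refine Tendsto.congr' ?_ (gauss_small_var hwto hδ)
    filter_upwards [eventually_ge_atTop 1] with q hq
    have hg := hgauss q hq (Pi.single j 1)
    have h1 : (fun x : Fin m → ℝ => Pi.single j 1 ⬝ᵥ x) = fun x => x j := by
      funext x
      rw [single_dotProduct, one_mul]
    have h3 : (Pi.single j 1 ⬝ᵥ ((((ργ ^ 2 / q : ℝ)) • Sgm q) *ᵥ Pi.single j 1))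
        = ργ ^ 2 / q * Sgm q j j := by
      rw [single_dotProduct, one_mul, Matrix.mulVec_single]
      simp
    rw [h1, h3] at hg
    simp only [dotProduct, Pi.zero_apply, mul_zero, Finset.sum_const_zero] at hg
    have hmeas : MeasurableSet {y : ℝ | δ ≤ |y|} :=
      measurableSet_le measurable_const measurable_abs
    have : μ q {x | δ ≤ |x j|} = ((μ q).map (fun x => x j)) {y | δ ≤ |y|} := by
      rw [Measure.map_apply (measurable_pi_apply j) hmeas]
      rfl
    rw [this, hg]
  -- key reduction
  have hkey : ∀ (T : Set (Fin m → ℝ)) (δ : ℝ), 0 < δ → (∀ x ∈ T, ∃ j, δ ≤ |x j|) →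
      Tendsto (fun q => μ q T) atTop (nhds 0) := by
    intro T δ hδ hT
    have hsum : Tendsto (fun q => ∑ j : Fin m, μ q {x | δ ≤ |x j|}) atTop (nhds 0) := by
      have := tendsto_finset_sum Finset.univ (fun j (_ : j ∈ Finset.univ) => hcoord δ hδ j)
      simpa using this
    refine tendsto_of_tendsto_of_tendsto_of_le_of_le tendsto_const_nhds hsum
      (fun q => zero_le) (fun q => ?_)
    calc μ q T ≤ μ q (⋃ j : Fin m, {x | δ ≤ |x j|}) :=
          measure_mono (fun x hx => Set.mem_iUnion.mpr (hT x hx))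
      _ ≤ ∑ j : Fin m, μ q {x | δ ≤ |x j|} := measure_iUnion_fintype_le _ _
  constructor
  · intro ε hε
    set g : (Fin m → ℝ) → ℝ := fun x => Real.sqrt (∑ i,
      ((m : ℝ)⁻¹ * (∑ j, (β i + x j * u i)) - β i) ^ 2) with hgdef
    have hcont : Continuous g := by
      apply Real.continuous_sqrt.comp
      apply continuous_finset_sum
      intro i _
      fun_prop
    have hg0 : g 0 = 0 := by
      have hz : ∀ i : Fin d, (m : ℝ)⁻¹ * (∑ j : Fin m, (β i + (0 : Fin m → ℝ) j * u i)) - β i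
          = 0 := by
        intro i
        simp only [Pi.zero_apply, zero_mul, add_zero, Finset.sum_const, Finset.card_univ,
          Fintype.card_fin, nsmul_eq_mul]
        rw [← mul_assoc, inv_mul_cancel₀ hm0, one_mul, sub_self]
      simp only [hgdef]
      rw [Finset.sum_congr rfl (fun i _ => by rw [hz i])]
      simp
    obtain ⟨δ, hδ, hsub⟩ := exists_delta hcont.continuousAt hg0 hε
    exact hkey _ δ hδ (fun x hx => hsub x (le_trans hx (le_abs_self _)))
  · intro hβ ε hε
    set g : (Fin m → ℝ) → ℝ := fun x => |Vstat (fun j i => β i + x j * u i)| with hgdef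
    have hB0 : (m : ℝ)⁻¹ * ∑ j : Fin m, ∑ i, (β i + (0 : Fin m → ℝ) j * u i) ^ 2
        = ∑ i, β i ^ 2 := by
      simp only [Pi.zero_apply, zero_mul, add_zero, Finset.sum_const, Finset.card_univ,
        Fintype.card_fin, nsmul_eq_mul]
      rw [← mul_assoc, inv_mul_cancel₀ hm0, one_mul]
    have hA0 : ∑ i, ((m : ℝ)⁻¹ * ∑ j : Fin m, (β i + (0 : Fin m → ℝ) j * u i)) ^ 2
        = ∑ i, β i ^ 2 := by
      refine Finset.sum_congr rfl (fun i _ => ?_)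
      simp only [Pi.zero_apply, zero_mul, add_zero, Finset.sum_const, Finset.card_univ,
        Fintype.card_fin, nsmul_eq_mul]
      rw [← mul_assoc, inv_mul_cancel₀ hm0, one_mul]
    have hBpos : 0 < ∑ i, β i ^ 2 := by
      obtain ⟨i, hi⟩ := Function.ne_iff.mp hβ
      refine Finset.sum_pos' (fun i _ => sq_nonneg _) ⟨i, Finset.mem_univ i, ?_⟩
      have : 0 < |β i| := abs_pos.mpr hi
      calc (0:ℝ) < |β i| ^ 2 := by positivity
        _ = β i ^ 2 := sq_abs _
    have hcontA : Continuous (fun x : Fin m → ℝ =>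
        ∑ i, ((m : ℝ)⁻¹ * ∑ j, (β i + x j * u i)) ^ 2) := by
      apply continuous_finset_sum
      intro i _
      fun_prop
    have hcontB : Continuous (fun x : Fin m → ℝ =>
        (m : ℝ)⁻¹ * ∑ j, ∑ i, (β i + x j * u i) ^ 2) := by
      fun_prop
    have hcont : ContinuousAt g 0 := by
      simp only [hgdef, Vstat]
      exact (continuous_abs.continuousAt).comp
        ((continuousAt_const.sub ((hcontA.continuousAt).div (hcontB.continuousAt)
          (by rw [hB0]; exact hBpos.ne'))))
    have hg0 : g 0 = 0 := by
      simp only [hgdef, Vstat]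
      rw [hA0, hB0, div_self hBpos.ne', sub_self, abs_zero]
    obtain ⟨δ, hδ, hsub⟩ := exists_delta hcont hg0 hε
    exact hkey _ δ hδ (fun x hx => hsub x (le_trans hx (le_abs_self _)))
end

section
/- Fix m ≥ 2, d ≥ 1, ρ_γ > 0, K > 0, and β ∈ ℝ^d. For each q ≥ 1, let γ^{(q)} be a spherically symmetric random vector on ℝ^q with E‖γ^{(q)}‖⁴ ≤ K ρ_γ⁴ / q², and let C^{(q)}(S_1),…,C^{(q)}(S_m) ∈ ℝ^{d×q} be matrices satisfying (1/(m q)) ∑_{j=1}^m tr(C^{(q)}(S_j)^⊤ C^{(q)}(S_j)) → 0 as q → ∞. Set β̂^{(q)}(S_j) = β + C^{(q)}(S_j) γ^{(q)}. Then m^{-1} ∑_{j=1}^m β̂^{(q)}(S_j) converges in probability to β as q → ∞. -/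
open MeasureTheory Matrix Filter

/-- A random vector (given by its law `μ` on `ℝ^q`) is spherically symmetric if for every
unit vector `e`, the law of `e⊤ν` coincides with the law of each coordinate `ν_i`. -/
def SphericallySymmetric {q : ℕ} (μ : Measure (Fin q → ℝ)) : Prop :=
  ∀ e : Fin q → ℝ, (∑ i, e i ^ 2) = 1 →
    ∀ i : Fin q, μ.map (fun x => e ⬝ᵥ x) = μ.map (fun x => x i)

/-- for spherically symmetric `γ⁽q⁾` with `E‖γ⁽q⁾‖⁴ ≤ K ρ_γ⁴/q²` and matrices
`C⁽q⁾(S_j)` with `(1/(mq)) ∑_j tr(C⁽q⁾(S_j)ᵀ C⁽q⁾(S_j)) → 0`, the average of the regression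
coefficients `β̂⁽q⁾(S_j) = β + C⁽q⁾(S_j) γ⁽q⁾` converges in probability to `β` as `q → ∞`. -/
theorem stmt_6 (m d : ℕ) (hm : 2 ≤ m) (hd : 1 ≤ d)
    (ργ K : ℝ) (hργ : 0 < ργ) (hK : 0 < K) (β : Fin d → ℝ)
    (μ : (q : ℕ) → Measure (Fin q → ℝ)) (hprob : ∀ q, IsProbabilityMeasure (μ q))
    (hsph : ∀ q, 1 ≤ q → SphericallySymmetric (μ q))
    (hint : ∀ q, 1 ≤ q → Integrable (fun x => (∑ i, x i ^ 2) ^ 2) (μ q))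
    (hmom : ∀ q, 1 ≤ q → ∫ x, (∑ i, x i ^ 2) ^ 2 ∂(μ q) ≤ K * ργ ^ 4 / q ^ 2)
    (C : (q : ℕ) → Fin m → Matrix (Fin d) (Fin q) ℝ)
    (htr : Tendsto (fun q : ℕ =>
      (∑ j, ((C q j)ᵀ * C q j).trace) / (m * q)) atTop (nhds 0)) :
    ∀ ε > (0 : ℝ), Tendsto (fun q : ℕ =>
      μ q {x | ε ≤ Real.sqrt (∑ i,
        ((m : ℝ)⁻¹ * (∑ j, (β i + (C q j *ᵥ x) i)) - β i) ^ 2)}) atTop (nhds 0) := by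
  intro ε hε
  have hm0 : (0 : ℝ) < m := by positivity
  have hbound : ∀ q : ℕ, 1 ≤ q →
      μ q {x | ε ≤ Real.sqrt (∑ i,
          ((m : ℝ)⁻¹ * (∑ j, (β i + (C q j *ᵥ x) i)) - β i) ^ 2)}
        ≤ ENNReal.ofReal
            ((∑ j, ((C q j)ᵀ * C q j).trace) / (m * q) * (Real.sqrt K * ργ ^ 2) / ε ^ 2) := by
    intro q hq
    haveI := hprob q
    have hq0 : (0 : ℝ) < q := by exact_mod_cast hq
    set g : (Fin q → ℝ) → ℝ := fun x => ∑ i, x i ^ 2 with hgdef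
    set f : (Fin q → ℝ) → ℝ := fun x =>
      ∑ i, ((m : ℝ)⁻¹ * (∑ j, (β i + (C q j *ᵥ x) i)) - β i) ^ 2 with hfdef
    have hf_nonneg : ∀ x, 0 ≤ f x := fun x =>
      Finset.sum_nonneg fun i _ => sq_nonneg _
    have hg_nonneg : ∀ x, 0 ≤ g x := fun x =>
      Finset.sum_nonneg fun i _ => sq_nonneg _
    -- f rewritten without β
    have hf_eq : ∀ x, f x = ∑ i, ((m : ℝ)⁻¹ * ∑ j, (C q j *ᵥ x) i) ^ 2 := by
      intro x
      refine Finset.sum_congr rfl fun i _ => ?_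
      congr 1
      rw [Finset.sum_add_distrib, Finset.sum_const, Finset.card_univ, Fintype.card_fin,
        nsmul_eq_mul]
      field_simp
      ring
    -- trace as sum of squares
    have htrace : ∀ j, ((C q j)ᵀ * C q j).trace = ∑ i, ∑ k, (C q j i k) ^ 2 := by
      intro j
      rw [Matrix.trace]
      simp only [Matrix.diag_apply, Matrix.mul_apply, Matrix.transpose_apply, ← sq]
      rw [Finset.sum_comm]
    have htr_nonneg : ∀ j, 0 ≤ ((C q j)ᵀ * C q j).trace := by
      intro j
      rw [htrace j]
      exact Finset.sum_nonneg fun i _ => Finset.sum_nonneg fun k _ => sq_nonneg _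
    -- rowwise Cauchy-Schwarz
    have hrow : ∀ j x, ∑ i, ((C q j *ᵥ x) i) ^ 2 ≤ ((C q j)ᵀ * C q j).trace * g x := by
      intro j x
      rw [htrace j, Finset.sum_mul]
      refine Finset.sum_le_sum fun i _ => ?_
      simpa [Matrix.mulVec, dotProduct] using
        Finset.sum_mul_sq_le_sq_mul_sq Finset.univ (fun k => C q j i k) (fun k => x k)
    set c : ℝ := (∑ j, ((C q j)ᵀ * C q j).trace) / m with hcdef
    have hc_nonneg : 0 ≤ c := by
      apply div_nonneg _ hm0.le
      exact Finset.sum_nonneg fun j _ => htr_nonneg j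
    -- key pointwise bound
    have hf_le : ∀ x, f x ≤ c * g x := by
      intro x
      rw [hf_eq x]
      have h1 : ∀ i : Fin d, ((m : ℝ)⁻¹ * ∑ j, (C q j *ᵥ x) i) ^ 2
          ≤ (m : ℝ)⁻¹ * ∑ j, ((C q j *ᵥ x) i) ^ 2 := by
        intro i
        rw [mul_pow]
        have h2 := sq_sum_le_card_mul_sum_sq (s := Finset.univ)
          (f := fun j => (C q j *ᵥ x) i)
        simp only [Finset.card_univ, Fintype.card_fin] at h2
        calc ((m : ℝ)⁻¹) ^ 2 * (∑ j, (C q j *ᵥ x) i) ^ 2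
            ≤ ((m : ℝ)⁻¹) ^ 2 * ((m : ℝ) * ∑ j, ((C q j *ᵥ x) i) ^ 2) := by
              exact mul_le_mul_of_nonneg_left h2 (by positivity)
          _ = (m : ℝ)⁻¹ * ∑ j, ((C q j *ᵥ x) i) ^ 2 := by
              field_simp
      calc ∑ i, ((m : ℝ)⁻¹ * ∑ j, (C q j *ᵥ x) i) ^ 2
          ≤ ∑ i, (m : ℝ)⁻¹ * ∑ j, ((C q j *ᵥ x) i) ^ 2 :=
            Finset.sum_le_sum fun i _ => h1 i
        _ = (m : ℝ)⁻¹ * ∑ j, ∑ i, ((C q j *ᵥ x) i) ^ 2 := by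
            rw [← Finset.mul_sum, Finset.sum_comm]
        _ ≤ (m : ℝ)⁻¹ * ∑ j, ((C q j)ᵀ * C q j).trace * g x := by
            refine mul_le_mul_of_nonneg_left ?_ (by positivity)
            exact Finset.sum_le_sum fun j _ => hrow j x
        _ = c * g x := by
            rw [← Finset.sum_mul, hcdef]
            ring
    -- measurability
    have hg_cont : Continuous g := by
      exact continuous_finset_sum _ fun i _ => (continuous_apply i).pow 2
    have hg_meas : AEStronglyMeasurable g (μ q) := hg_cont.aestronglyMeasurable
    have hf_cont : Continuous f := by
      refine continuous_finset_sum _ fun i _ => Continuous.pow ?_ 2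
      refine Continuous.sub (Continuous.mul continuous_const ?_) continuous_const
      refine continuous_finset_sum _ fun j _ => Continuous.add continuous_const ?_
      simp only [Matrix.mulVec, dotProduct]
      exact continuous_finset_sum _ fun k _ => continuous_const.mul (continuous_apply k)
    -- integrability of g
    have hg_int : Integrable g (μ q) := by
      refine ((hint q hq).add (integrable_const 1)).mono' hg_meas ?_
      refine Eventually.of_forall fun x => ?_
      rw [Real.norm_eq_abs, abs_of_nonneg (hg_nonneg x)]
      simp only [Pi.add_apply]
      nlinarith [sq_nonneg (g x - 1), hg_nonneg x]
    -- second-moment bound for g via AM-GM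
    set t : ℝ := Real.sqrt K * ργ ^ 2 / q with htdef
    have hsK : (0 : ℝ) < Real.sqrt K := Real.sqrt_pos.mpr hK
    have ht : 0 < t := by positivity
    have hg_bound : ∫ x, g x ∂(μ q) ≤ t := by
      have hint2 : Integrable (fun x => t / 2 + (g x) ^ 2 / (2 * t)) (μ q) := by
        exact (integrable_const _).add ((hint q hq).div_const _)
      have h1 : ∫ x, g x ∂(μ q) ≤ ∫ x, (t / 2 + (g x) ^ 2 / (2 * t)) ∂(μ q) := by
        refine integral_mono hg_int hint2 fun x => ?_
        have h2 := sq_nonneg (g x - t)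
        have ht' := ht
        rw [div_add_div _ _ (by norm_num) (by positivity), le_div_iff₀ (by positivity)]
        nlinarith
      have h3 : ∫ x, (t / 2 + (g x) ^ 2 / (2 * t)) ∂(μ q)
          = t / 2 + (∫ x, (g x) ^ 2 ∂(μ q)) / (2 * t) := by
        rw [integral_add (integrable_const _) ((hint q hq).div_const _), integral_const,
          integral_div, probReal_univ]
        simp [hgdef]
      have h4 : (∫ x, (g x) ^ 2 ∂(μ q)) ≤ K * ργ ^ 4 / q ^ 2 := hmom q hq
      have ht2 : t ^ 2 = K * ργ ^ 4 / q ^ 2 := by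
        rw [htdef, div_pow, mul_pow, Real.sq_sqrt hK.le]
        ring
      have h5 : t / 2 + (K * ργ ^ 4 / q ^ 2) / (2 * t) = t := by
        rw [← ht2]
        field_simp
        ring
      calc ∫ x, g x ∂(μ q) ≤ t / 2 + (∫ x, (g x) ^ 2 ∂(μ q)) / (2 * t) := h3 ▸ h1
        _ ≤ t / 2 + (K * ργ ^ 4 / q ^ 2) / (2 * t) := by
            gcongr
        _ = t := h5
    -- integrability of f
    have hf_int : Integrable f (μ q) := by
      refine (hg_int.const_mul c).mono' hf_cont.aestronglyMeasurable ?_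
      refine Eventually.of_forall fun x => ?_
      rw [Real.norm_eq_abs, abs_of_nonneg (hf_nonneg x)]
      exact hf_le x
    have hf_integral : ∫ x, f x ∂(μ q) ≤ c * t := by
      calc ∫ x, f x ∂(μ q) ≤ ∫ x, c * g x ∂(μ q) :=
            integral_mono hf_int (hg_int.const_mul c) hf_le
        _ = c * ∫ x, g x ∂(μ q) := integral_const_mul c g
        _ ≤ c * t := mul_le_mul_of_nonneg_left hg_bound hc_nonneg
    -- Markov
    have hset : {x | ε ≤ Real.sqrt (f x)} = {x | ε ^ 2 ≤ f x} := by
      ext x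
      simp only [Set.mem_setOf_eq]
      exact Real.le_sqrt hε.le (hf_nonneg x)
    have hmarkov := mul_meas_ge_le_integral_of_nonneg
      (Eventually.of_forall hf_nonneg) hf_int (ε ^ 2)
    have hne : μ q {x | ε ^ 2 ≤ f x} ≠ ⊤ := measure_ne_top _ _
    have htoReal : (μ q {x | ε ^ 2 ≤ f x}).toReal ≤ c * t / ε ^ 2 := by
      rw [le_div_iff₀ (by positivity : (0:ℝ) < ε ^ 2)]
      calc (μ q {x | ε ^ 2 ≤ f x}).toReal * ε ^ 2
          = ε ^ 2 * (μ q {x | ε ^ 2 ≤ f x}).toReal := by ring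
        _ ≤ ∫ x, f x ∂(μ q) := hmarkov
        _ ≤ c * t := hf_integral
    have hfinal : c * t = (∑ j, ((C q j)ᵀ * C q j).trace) / (m * q) * (Real.sqrt K * ργ ^ 2) := by
      rw [hcdef, htdef]
      field_simp
    calc μ q {x | ε ≤ Real.sqrt (f x)}
        = μ q {x | ε ^ 2 ≤ f x} := by rw [hset]
      _ = ENNReal.ofReal ((μ q {x | ε ^ 2 ≤ f x}).toReal) := (ENNReal.ofReal_toReal hne).symm
      _ ≤ ENNReal.ofReal
            ((∑ j, ((C q j)ᵀ * C q j).trace) / (m * q) * (Real.sqrt K * ργ ^ 2) / ε ^ 2) := by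
          apply ENNReal.ofReal_le_ofReal
          rw [← hfinal]
          exact htoReal
  -- squeeze
  have h0 : Tendsto (fun q : ℕ => ENNReal.ofReal
      ((∑ j, ((C q j)ᵀ * C q j).trace) / (m * q) * (Real.sqrt K * ργ ^ 2) / ε ^ 2))
      atTop (nhds 0) := by
    have hreal : Tendsto (fun q : ℕ =>
        (∑ j, ((C q j)ᵀ * C q j).trace) / (m * q) * (Real.sqrt K * ργ ^ 2) / ε ^ 2)
        atTop (nhds 0) := by
      have := (htr.mul_const (Real.sqrt K * ργ ^ 2)).div_const (ε ^ 2)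
      simpa using this
    have := ENNReal.tendsto_ofReal hreal
    simpa using this
  refine tendsto_of_tendsto_of_tendsto_of_le_of_le' tendsto_const_nhds h0 ?_ ?_
  · exact Eventually.of_forall fun q => zero_le
  · filter_upwards [eventually_ge_atTop 1] with q hq using hbound q hq
end

section
/- Fix m ≥ 2, d ≥ 1, ρ_γ > 0, K > 0, and β ∈ ℝ^d with β ≠ 0. For each q ≥ 1, let γ^{(q)} be a spherically symmetric random vector on ℝ^q with E‖γ^{(q)}‖⁴ ≤ K ρ_γ⁴ / q², and let C^{(q)}(S_1),…,C^{(q)}(S_m) ∈ ℝ^{d×q} be matrices satisfying (1/(m q)) ∑_{j=1}^m tr(C^{(q)}(S_j)^⊤ C^{(q)}(S_j)) → 0 as q → ∞. Set β̂^{(q)}(S_j) = β + C^{(q)}(S_j) γ^{(q)}. Then the stability statistic 𝒱(β̂^{(q)}(S_1),…,β̂^{(q)}(S_m)) converges in probability to 0 as q → ∞. -/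
open MeasureTheory Matrix Filter

/- ------------------ auxiliary lemmas ------------------ -/

lemma aux_meas_g {q : ℕ} : Measurable fun x : Fin q → ℝ => ∑ i, x i ^ 2 :=
  Finset.measurable_sum _ fun i _ => (measurable_pi_apply i).pow_const 2

lemma aux_meas_dot {q : ℕ} (c : Fin q → ℝ) :
    Measurable fun x : Fin q → ℝ => (∑ k, c k * x k) ^ 2 :=
  (Finset.measurable_sum _ fun k _ =>
    (by fun_prop : Measurable fun x : Fin q → ℝ => c k * x k)).pow_const 2

lemma aux_integrable_g {q : ℕ} (μ : Measure (Fin q → ℝ)) [IsProbabilityMeasure μ]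
    (h : Integrable (fun x => (∑ i, x i ^ 2) ^ 2) μ) :
    Integrable (fun x => ∑ i, x i ^ 2) μ := by
  refine Integrable.mono' (g := fun x => (1 + (∑ i, x i ^ 2) ^ 2) / 2)
    (((integrable_const 1).add h).div_const 2) aux_meas_g.aestronglyMeasurable ?_
  refine Filter.Eventually.of_forall fun x => ?_
  have h0 : (0:ℝ) ≤ ∑ i, x i ^ 2 := Finset.sum_nonneg fun i _ => sq_nonneg _
  rw [Real.norm_eq_abs, abs_of_nonneg h0]
  nlinarith [sq_nonneg ((∑ i, x i ^ 2) - 1)]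

lemma aux_integrable_dot {q : ℕ} (μ : Measure (Fin q → ℝ))
    (hg : Integrable (fun x => ∑ i, x i ^ 2) μ) (c : Fin q → ℝ) :
    Integrable (fun x => (∑ k, c k * x k) ^ 2) μ := by
  refine Integrable.mono' (g := fun x => (∑ k, c k ^ 2) * ∑ i, x i ^ 2)
    (hg.const_mul _) (aux_meas_dot c).aestronglyMeasurable ?_
  refine Filter.Eventually.of_forall fun x => ?_
  rw [Real.norm_eq_abs, abs_of_nonneg (sq_nonneg _)]
  exact Finset.sum_mul_sq_le_sq_mul_sq _ _ _

lemma aux_integrable_coord {q : ℕ} (μ : Measure (Fin q → ℝ))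
    (hg : Integrable (fun x => ∑ i, x i ^ 2) μ) (i : Fin q) :
    Integrable (fun x => x i ^ 2) μ := by
  refine Integrable.mono' (g := fun x => ∑ k, x k ^ 2) hg
    ((measurable_pi_apply i).pow_const 2).aestronglyMeasurable ?_
  refine Filter.Eventually.of_forall fun x => ?_
  rw [Real.norm_eq_abs, abs_of_nonneg (sq_nonneg _)]
  exact Finset.single_le_sum (fun k _ => sq_nonneg (x k)) (Finset.mem_univ i)

/-- The key integral computation from spherical symmetry. -/
lemma aux_dot_sq_integral {q : ℕ} (hq : 1 ≤ q) (μ : Measure (Fin q → ℝ))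
    [IsProbabilityMeasure μ] (hs : SphericallySymmetric μ)
    (hg : Integrable (fun x => ∑ i, x i ^ 2) μ) (c : Fin q → ℝ) :
    ∫ x, (∑ k, c k * x k) ^ 2 ∂μ
      = (∑ k, c k ^ 2) * (∫ x, ∑ i, x i ^ 2 ∂μ) / q := by
  have key : ∀ e : Fin q → ℝ, (∑ i, e i ^ 2) = 1 →
      ∀ i : Fin q, ∫ x, (∑ k, e k * x k) ^ 2 ∂μ = ∫ x, x i ^ 2 ∂μ := by
    intro e he i
    have hφ : Measurable fun x : Fin q → ℝ => e ⬝ᵥ x := by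
      simpa [dotProduct] using
        (Finset.measurable_sum Finset.univ
          fun k _ => (by fun_prop : Measurable fun x : Fin q → ℝ => e k * x k))
    have hm2 : Measurable fun t : ℝ => t ^ 2 := measurable_id.pow_const 2
    have h1 : ∫ t, t ^ 2 ∂(μ.map (fun x => e ⬝ᵥ x))
        = ∫ x, (∑ k, e k * x k) ^ 2 ∂μ := by
      rw [integral_map (φ := fun x => e ⬝ᵥ x) (f := fun t : ℝ => t ^ 2)
        hφ.aemeasurable hm2.aestronglyMeasurable]
      simp [dotProduct]
    have h2 : ∫ t, t ^ 2 ∂(μ.map (fun x : Fin q → ℝ => x i))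
        = ∫ x, x i ^ 2 ∂μ :=
      integral_map (φ := fun x : Fin q → ℝ => x i) (f := fun t : ℝ => t ^ 2)
        (measurable_pi_apply i).aemeasurable hm2.aestronglyMeasurable
    rw [← h1, hs e he i, h2]
  rcases eq_or_ne (∑ k, c k ^ 2) 0 with hc0 | hc0
  · have hc : ∀ k, c k = 0 := fun k => sq_eq_zero_iff.mp <|
      (Finset.sum_eq_zero_iff_of_nonneg (fun k _ => sq_nonneg (c k))).mp hc0 k
        (Finset.mem_univ k)
    simp [hc]
  · have hcnn : (0:ℝ) ≤ ∑ k, c k ^ 2 := Finset.sum_nonneg fun k _ => sq_nonneg _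
    have hcpos : (0:ℝ) < ∑ k, c k ^ 2 := lt_of_le_of_ne hcnn (Ne.symm hc0)
    set r := Real.sqrt (∑ k, c k ^ 2) with hrdef
    have hr : 0 < r := Real.sqrt_pos.mpr hcpos
    have hr2 : r ^ 2 = ∑ k, c k ^ 2 := Real.sq_sqrt hcnn
    set e : Fin q → ℝ := fun k => c k / r with hedef
    have he : ∑ k, e k ^ 2 = 1 := by
      simp only [hedef, div_pow]
      rw [← Finset.sum_div, ← hr2]
      exact div_self (by positivity)
    have hrw : ∀ x : Fin q → ℝ,
        (∑ k, c k * x k) ^ 2 = r ^ 2 * (∑ k, e k * x k) ^ 2 := by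
      intro x
      have h2 : ∑ k, c k * x k = r * ∑ k, e k * x k := by
        rw [Finset.mul_sum]
        refine Finset.sum_congr rfl fun k _ => ?_
        simp only [hedef]; field_simp [hr.ne']
      rw [h2]; ring
    have hq0 : (0:ℝ) < q := by exact_mod_cast hq
    obtain ⟨i0⟩ : Nonempty (Fin q) := ⟨⟨0, by omega⟩⟩
    have hsum : ∫ x, ∑ i, x i ^ 2 ∂μ
        = (q : ℝ) * ∫ x, (∑ k, e k * x k) ^ 2 ∂μ := by
      rw [integral_finset_sum _ fun i _ => aux_integrable_coord μ hg i]
      have : ∀ i : Fin q, ∫ x, x i ^ 2 ∂μ = ∫ x, (∑ k, e k * x k) ^ 2 ∂μ :=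
        fun i => (key e he i).symm
      simp [this, Finset.sum_const, Finset.card_univ]
    calc ∫ x, (∑ k, c k * x k) ^ 2 ∂μ
        = ∫ x, r ^ 2 * (∑ k, e k * x k) ^ 2 ∂μ := by simp_rw [hrw]
      _ = r ^ 2 * ∫ x, (∑ k, e k * x k) ^ 2 ∂μ := integral_const_mul _ _
      _ = (∑ k, c k ^ 2) * (∫ x, ∑ i, x i ^ 2 ∂μ) / q := by
          rw [hsum, hr2]; field_simp

/-- Deterministic bound: if the average squared perturbation is small then the
stability statistic is small. -/
lemma aux_vstat_bound {m d : ℕ} (hm : 2 ≤ m) (β : Fin d → ℝ)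
    (hB : 0 < ∑ i, β i ^ 2) (w : Fin m → Fin d → ℝ) {ε : ℝ} (hε : 0 < ε)
    (hT : (m:ℝ)⁻¹ * ∑ j, ∑ i, w j i ^ 2
      < min ((∑ i, β i ^ 2) / 16) (ε * (∑ i, β i ^ 2) / 16)) :
    |Vstat (fun j i => β i + w j i)| < ε := by
  have hm0 : (0:ℝ) < m := by exact_mod_cast (by omega : 0 < m)
  have hmne : (m:ℝ) ≠ 0 := ne_of_gt hm0
  set B := ∑ i, β i ^ 2 with hBdef
  set wbar : Fin d → ℝ := fun i => (m:ℝ)⁻¹ * ∑ j, w j i with hwbar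
  set P := ∑ i, β i * wbar i with hPdef
  set Q := ∑ i, wbar i ^ 2 with hQdef
  set T := (m:ℝ)⁻¹ * ∑ j, ∑ i, w j i ^ 2 with hTdef
  have havg : ∀ i, (m:ℝ)⁻¹ * ∑ j, (β i + w j i) = β i + wbar i := by
    intro i
    rw [Finset.sum_add_distrib, Finset.sum_const, Finset.card_univ,
      Fintype.card_fin, nsmul_eq_mul, mul_add, inv_mul_cancel_left₀ hmne]
  have hS1 : (∑ i, ((m:ℝ)⁻¹ * ∑ j, (β i + w j i)) ^ 2) = B + 2 * P + Q := by
    simp_rw [havg, add_sq, Finset.sum_add_distrib, hBdef, hPdef, hQdef,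
      Finset.mul_sum, mul_assoc]
  have hS2 : (m:ℝ)⁻¹ * ∑ j, ∑ i, (β i + w j i) ^ 2 = B + 2 * P + T := by
    have hP' : P = (m:ℝ)⁻¹ * ∑ j, ∑ i, β i * w j i := by
      rw [hPdef, Finset.sum_comm (f := fun j i => β i * w j i), Finset.mul_sum]
      refine Finset.sum_congr rfl fun i _ => ?_
      show β i * ((m:ℝ)⁻¹ * ∑ j, w j i) = (m:ℝ)⁻¹ * ∑ j, β i * w j i
      rw [← Finset.mul_sum]
      ring
    simp_rw [add_sq, Finset.sum_add_distrib]
    rw [Finset.sum_const, Finset.card_univ, Fintype.card_fin, nsmul_eq_mul]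
    have h2 : ∑ j : Fin m, ∑ i, 2 * β i * w j i
        = 2 * ∑ j : Fin m, ∑ i, β i * w j i := by
      rw [Finset.mul_sum]
      exact Finset.sum_congr rfl fun j _ => by
        rw [Finset.mul_sum]; exact Finset.sum_congr rfl fun i _ => by ring
    rw [h2, mul_add, mul_add, inv_mul_cancel_left₀ hmne, hP', hTdef]
    ring
  have hQT : Q ≤ T := by
    rw [hQdef, hTdef, Finset.sum_comm (f := fun j i => w j i ^ 2), Finset.mul_sum]
    refine Finset.sum_le_sum fun i _ => ?_
    show ((m:ℝ)⁻¹ * ∑ j, w j i) ^ 2 ≤ (m:ℝ)⁻¹ * ∑ j, w j i ^ 2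
    have hcs : (∑ j : Fin m, 1 * w j i) ^ 2
        ≤ (∑ j : Fin m, (1:ℝ) ^ 2) * ∑ j, w j i ^ 2 :=
      Finset.sum_mul_sq_le_sq_mul_sq _ _ _
    simp only [one_mul, one_pow, Finset.sum_const, Finset.card_univ,
      Fintype.card_fin, nsmul_eq_mul, mul_one] at hcs
    rw [mul_pow]
    calc (m:ℝ)⁻¹ ^ 2 * (∑ j, w j i) ^ 2
        ≤ (m:ℝ)⁻¹ ^ 2 * ((m:ℝ) * ∑ j, w j i ^ 2) := by
          exact mul_le_mul_of_nonneg_left hcs (by positivity)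
      _ = (m:ℝ)⁻¹ * ∑ j, w j i ^ 2 := by field_simp
  have hQ0 : 0 ≤ Q := Finset.sum_nonneg fun i _ => sq_nonneg _
  have hT0 : 0 ≤ T := hQ0.trans hQT
  have hP2 : P ^ 2 ≤ B * Q := Finset.sum_mul_sq_le_sq_mul_sq _ _ _
  have hT1 : T < B / 16 := lt_of_lt_of_le hT (min_le_left _ _)
  have hT2 : T < ε * B / 16 := lt_of_lt_of_le hT (min_le_right _ _)
  have hS2pos : B / 2 < B + 2 * P + T := by
    nlinarith [sq_nonneg (4 * P + B)]
  have hden : (0:ℝ) < B + 2 * P + T := by linarith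
  rw [Vstat, hS1, hS2]
  have heq : 1 - (B + 2 * P + Q) / (B + 2 * P + T)
      = (T - Q) / (B + 2 * P + T) := by
    field_simp; ring
  rw [heq, abs_of_nonneg (div_nonneg (by linarith) hden.le)]
  rw [div_lt_iff₀ hden]
  nlinarith [mul_lt_mul_of_pos_left hS2pos hε]

/-- alternative case `β ≠ 0`.  For spherically symmetric `γ⁽q⁾` with
`E‖γ⁽q⁾‖⁴ ≤ K ρ_γ⁴/q²` and matrices `C⁽q⁾(S_j)` with
`(1/(mq)) ∑_j tr(C⁽q⁾(S_j)ᵀ C⁽q⁾(S_j)) → 0`, the stability statistic of the regression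
coefficients `β̂⁽q⁾(S_j) = β + C⁽q⁾(S_j) γ⁽q⁾` converges in probability to `0` as `q → ∞`. -/
theorem stmt_7 (m d : ℕ) (hm : 2 ≤ m) (hd : 1 ≤ d)
    (ργ K : ℝ) (hργ : 0 < ργ) (hK : 0 < K) (β : Fin d → ℝ) (hβ : β ≠ 0)
    (μ : (q : ℕ) → Measure (Fin q → ℝ)) (hprob : ∀ q, IsProbabilityMeasure (μ q))
    (hsph : ∀ q, 1 ≤ q → SphericallySymmetric (μ q))
    (hint : ∀ q, 1 ≤ q → Integrable (fun x => (∑ i, x i ^ 2) ^ 2) (μ q))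
    (hmom : ∀ q, 1 ≤ q → ∫ x, (∑ i, x i ^ 2) ^ 2 ∂(μ q) ≤ K * ργ ^ 4 / q ^ 2)
    (C : (q : ℕ) → Fin m → Matrix (Fin d) (Fin q) ℝ)
    (htr : Tendsto (fun q : ℕ =>
      (∑ j, ((C q j)ᵀ * C q j).trace) / (m * q)) atTop (nhds 0)) :
    ∀ ε > (0 : ℝ), Tendsto (fun q : ℕ =>
      μ q {x | ε ≤ |Vstat (fun j i => β i + (C q j *ᵥ x) i)|}) atTop (nhds 0) := by
  intro ε hε
  have hm0 : (0:ℝ) < m := by exact_mod_cast (by omega : 0 < m)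
  -- positivity of ‖β‖²
  have hB : 0 < ∑ i, β i ^ 2 := by
    obtain ⟨i, hi⟩ := Function.ne_iff.mp hβ
    exact Finset.sum_pos' (fun i _ => sq_nonneg _)
      ⟨i, Finset.mem_univ i, lt_of_le_of_ne (sq_nonneg _) (Ne.symm (pow_ne_zero 2 hi))⟩
  set B := ∑ i, β i ^ 2 with hBdef
  set δ := min (B / 16) (ε * B / 16) with hδdef
  have hδ : 0 < δ := lt_min (by positivity) (by positivity)
  set M := Real.sqrt (K * ργ ^ 4) with hMdef
  have hM : 0 ≤ M := Real.sqrt_nonneg _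
  set a : ℕ → ℝ := fun q => (∑ j, ((C q j)ᵀ * C q j).trace) / (m * q) with hadef
  -- main eventual bound
  have hbound : ∀ᶠ q : ℕ in atTop,
      μ q {x | ε ≤ |Vstat (fun j i => β i + (C q j *ᵥ x) i)|}
        ≤ ENNReal.ofReal (a q * M / δ) := by
    filter_upwards [eventually_ge_atTop 1] with q hq
    haveI := hprob q
    have hq0 : (0:ℝ) < q := by exact_mod_cast hq
    have hg2 := hint q hq
    have hg := aux_integrable_g (μ q) hg2
    -- the dominating statistic T
    set f : (Fin q → ℝ) → ℝ :=
      fun x => (m:ℝ)⁻¹ * ∑ j, ∑ i, (∑ k, C q j i k * x k) ^ 2 with hfdef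
    have hmulvec : ∀ (j : Fin m) (x : Fin q → ℝ) (i : Fin d),
        (C q j *ᵥ x) i = ∑ k, C q j i k * x k := by
      intro j x i; simp [Matrix.mulVec, dotProduct]
    -- set inclusion
    have hsub : {x | ε ≤ |Vstat (fun j i => β i + (C q j *ᵥ x) i)|}
        ⊆ {x | δ ≤ f x} := by
      intro x hx
      by_contra hcon
      have hlt : f x < δ := lt_of_not_ge hcon
      have := aux_vstat_bound hm β hB (fun j i => (C q j *ᵥ x) i) hε
        (by simp_rw [hmulvec] at hlt ⊢; exact hlt)
      exact absurd hx (not_le.mpr (by simpa using this))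
    -- integrability of f
    have hfint : Integrable f (μ q) := by
      exact (integrable_finset_sum _ fun j _ =>
        integrable_finset_sum _ fun i _ =>
          aux_integrable_dot (μ q) hg (fun k => C q j i k)).const_mul _
    have hfnn : ∀ x, 0 ≤ f x := fun x => by
      refine mul_nonneg (by positivity) ?_
      exact Finset.sum_nonneg fun j _ => Finset.sum_nonneg fun i _ => sq_nonneg _
    -- second moment bound: ∫ g ≤ M
    have hcnn : 0 ≤ ∫ x, ∑ i, x i ^ 2 ∂(μ q) :=
      integral_nonneg fun x => Finset.sum_nonneg fun i _ => sq_nonneg _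
    have hgM : ∫ x, ∑ i, x i ^ 2 ∂(μ q) ≤ M := by
      set cI := ∫ x, ∑ i, x i ^ 2 ∂(μ q) with hcI
      have h0 : 0 ≤ ∫ x, ((∑ i, x i ^ 2) - cI) ^ 2 ∂(μ q) :=
        integral_nonneg fun x => sq_nonneg _
      have hexp : ∀ x : Fin q → ℝ, ((∑ i, x i ^ 2) - cI) ^ 2
          = ((∑ i, x i ^ 2) ^ 2 - 2 * cI * (∑ i, x i ^ 2)) + cI ^ 2 :=
        fun x => by ring
      have hint1 : Integrable
          (fun x : Fin q → ℝ => (∑ i, x i ^ 2) ^ 2 - 2 * cI * (∑ i, x i ^ 2))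
          (μ q) := hg2.sub (hg.const_mul _)
      rw [integral_congr_ae (Filter.Eventually.of_forall hexp)] at h0
      rw [integral_add hint1 (integrable_const _),
        integral_sub hg2 (hg.const_mul _), integral_const_mul,
        integral_const] at h0
      simp only [measure_univ, ENNReal.toReal_one, probReal_univ, smul_eq_mul, one_mul] at h0
      rw [← hcI] at h0
      have hc2 : cI ^ 2 ≤ K * ργ ^ 4 / q ^ 2 := by
        have := hmom q hq
        nlinarith
      have hc2' : cI ^ 2 ≤ K * ργ ^ 4 := by
        have hq1 : (1:ℝ) ≤ (q:ℝ) := by exact_mod_cast hq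
        have h1 : K * ργ ^ 4 / q ^ 2 ≤ K * ργ ^ 4 :=
          div_le_self (by positivity) (by nlinarith)
        linarith
      exact (Real.le_sqrt hcnn (by positivity)).mpr hc2'
    -- compute ∫ f
    have htrace : ∀ j, ((C q j)ᵀ * C q j).trace = ∑ i, ∑ k, (C q j i k) ^ 2 := by
      intro j
      rw [Matrix.trace]
      rw [Finset.sum_comm (f := fun i k => C q j i k ^ 2)]
      refine Finset.sum_congr rfl fun k _ => ?_
      simp [Matrix.diag, Matrix.mul_apply, Matrix.transpose_apply, sq]
    have hmne : (m:ℝ) ≠ 0 := ne_of_gt hm0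
    have hqne : (q:ℝ) ≠ 0 := ne_of_gt hq0
    have hintf : ∫ x, f x ∂(μ q) = a q * ∫ x, ∑ i, x i ^ 2 ∂(μ q) := by
      simp only [hfdef]
      rw [integral_const_mul, integral_finset_sum _ (fun j _ =>
        integrable_finset_sum _ fun i _ =>
          aux_integrable_dot (μ q) hg (fun k => C q j i k))]
      have : ∀ j : Fin m, ∫ x, ∑ i, (∑ k, C q j i k * x k) ^ 2 ∂(μ q)
          = ((C q j)ᵀ * C q j).trace * (∫ x, ∑ i, x i ^ 2 ∂(μ q)) / q := by
        intro j
        rw [integral_finset_sum _ fun i _ =>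
          aux_integrable_dot (μ q) hg (fun k => C q j i k)]
        have h3 : ∀ i : Fin d, ∫ x, (∑ k, C q j i k * x k) ^ 2 ∂(μ q)
            = (∑ k, (C q j i k) ^ 2) * (∫ x, ∑ i, x i ^ 2 ∂(μ q)) / q :=
          fun i => aux_dot_sq_integral hq (μ q) (hsph q hq) hg _
        simp_rw [h3, htrace j, Finset.sum_mul, Finset.sum_div]
      simp_rw [this]
      simp only [hadef]
      rw [Finset.mul_sum, div_mul_eq_mul_div, Finset.sum_mul, Finset.sum_div]
      refine Finset.sum_congr rfl fun j _ => ?_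
      field_simp
    have hann : 0 ≤ a q := by
      rw [hadef]
      refine div_nonneg (Finset.sum_nonneg fun j _ => ?_) (by positivity)
      rw [htrace j]
      exact Finset.sum_nonneg fun i _ => Finset.sum_nonneg fun k _ => sq_nonneg _
    have hintf_le : ∫ x, f x ∂(μ q) ≤ a q * M := by
      rw [hintf]; exact mul_le_mul_of_nonneg_left hgM hann
    -- Markov
    have hmarkov := mul_meas_ge_le_integral_of_nonneg
      (Filter.Eventually.of_forall hfnn) hfint δ
    have hfin : μ q {x | δ ≤ f x} ≠ ⊤ := measure_ne_top _ _
    have htoreal : (μ q {x | δ ≤ f x}).toReal ≤ a q * M / δ := by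
      rw [le_div_iff₀ hδ]
      calc (μ q {x | δ ≤ f x}).toReal * δ
          = δ * (μ q {x | δ ≤ f x}).toReal := by ring
        _ ≤ ∫ x, f x ∂(μ q) := hmarkov
        _ ≤ a q * M := hintf_le
    calc μ q {x | ε ≤ |Vstat (fun j i => β i + (C q j *ᵥ x) i)|}
        ≤ μ q {x | δ ≤ f x} := measure_mono hsub
      _ = ENNReal.ofReal ((μ q {x | δ ≤ f x}).toReal) :=
          (ENNReal.ofReal_toReal hfin).symm
      _ ≤ ENNReal.ofReal (a q * M / δ) := ENNReal.ofReal_le_ofReal htoreal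
  -- conclude by squeezing
  have hupper : Tendsto (fun q : ℕ => ENNReal.ofReal (a q * M / δ)) atTop
      (nhds 0) := by
    have h1 : Tendsto (fun q : ℕ => a q * M / δ) atTop (nhds 0) := by
      have := (htr.mul_const M).div_const δ
      simpa using this
    simpa using ENNReal.tendsto_ofReal h1
  refine tendsto_of_tendsto_of_tendsto_of_le_of_le' tendsto_const_nhds hupper
    (Filter.Eventually.of_forall fun q => zero_le) hbound
end

section
/- Fix m ≥ 2, d ≥ 1, q ≥ 1, K > 0, and matrices C(S_1),…,C(S_m) ∈ ℝ^{d×q}. For each n, let β_n ∈ ℝ^d with β_n ≠ 0, let ρ_n > 0, let γ^{(n)} be a spherically symmetric random vector on ℝ^q with E‖γ^{(n)}‖⁴ ≤ K ρ_n⁴ / q², and set β̂_j^{(n)} = β_n + C(S_j) γ^{(n)} for j = 1,…,m. If ρ_n / ‖β_n‖ → 0 as n → ∞, then E[𝒱(β̂_1^{(n)},…,β̂_m^{(n)})] → 0 as n → ∞. -/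
open MeasureTheory Matrix Filter

-- per-coordinate Cauchy-Schwarz
lemma aux_cs {m : ℕ} (a : Fin m → ℝ) : ((m:ℝ)⁻¹ * ∑ j, a j)^2 ≤ (m:ℝ)⁻¹ * ∑ j, a j ^2 := by
  rcases Nat.eq_zero_or_pos m with h | h
  · subst h; simp
  have hm : (0:ℝ) < m := by exact_mod_cast h
  have := sq_sum_le_card_mul_sum_sq (s := Finset.univ) (f := a)
  simp only [Finset.card_univ, Fintype.card_fin] at this
  rw [mul_pow]
  rw [inv_pow]
  rw [inv_mul_le_iff₀ (by positivity), ← mul_assoc]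
  calc (∑ j, a j)^2 ≤ (m:ℝ) * ∑ j, a j ^2 := this
    _ = (m:ℝ)^2 * (m:ℝ)⁻¹ * ∑ j, a j^2 := by
        field_simp

lemma Vstat_num_le_den {m d : ℕ} (v : Fin m → Fin d → ℝ) :
    (∑ i, ((m : ℝ)⁻¹ * ∑ j, v j i) ^ 2) ≤ (m : ℝ)⁻¹ * ∑ j, ∑ i, v j i ^ 2 := by
  rw [Finset.mul_sum]
  rw [show (∑ j, (m:ℝ)⁻¹ * ∑ i, v j i ^ 2) = ∑ i, (m:ℝ)⁻¹ * ∑ j, v j i ^2 by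
    simp_rw [Finset.mul_sum]
    exact Finset.sum_comm]
  exact Finset.sum_le_sum fun i _ => aux_cs (fun j => v j i)

set_option maxHeartbeats 1000000 in
lemma key_bound {m d : ℕ} (hm : 0 < m) (b : Fin d → ℝ) (hS : 0 < ∑ i, b i ^ 2)
    (w : Fin m → Fin d → ℝ) (c2X : ℝ) (hW : ∀ j, ∑ i, w j i ^ 2 ≤ c2X) :
    Vstat (fun j i => b i + w j i) ≤
      2 * c2X / (∑ i, b i ^ 2) + 256 * c2X ^ 2 / (∑ i, b i ^ 2) ^ 2 := by
  set S := ∑ i, b i ^ 2 with hSdef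
  have hm0 : (m : ℝ) ≠ 0 := by positivity
  have hc2X : 0 ≤ c2X := le_trans (by positivity) (hW ⟨0, hm⟩)
  set u : Fin d → ℝ := fun i => (m : ℝ)⁻¹ * ∑ j, w j i with hu
  set U : ℝ := ∑ i, u i ^ 2 with hU
  set B : ℝ := ∑ i, b i * u i with hB
  set W : ℝ := (m : ℝ)⁻¹ * ∑ j, ∑ i, w j i ^ 2 with hWdef
  have hU0 : 0 ≤ U := hU ▸ Finset.sum_nonneg fun i _ => sq_nonneg _
  -- numerator and denominator
  have hnum : (∑ i, ((m : ℝ)⁻¹ * ∑ j, (b i + w j i)) ^ 2) = S + 2 * B + U := by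
    have h0 : ∀ i, ((m : ℝ)⁻¹ * ∑ j, (b i + w j i)) = b i + u i := by
      intro i
      rw [Finset.sum_add_distrib, Finset.sum_const, Finset.card_univ, Fintype.card_fin,
        nsmul_eq_mul, mul_add, ← mul_assoc, inv_mul_cancel₀ hm0, one_mul]
    simp_rw [h0, add_sq, Finset.sum_add_distrib]
    have e : (∑ i, 2 * b i * u i) = 2 * B := by
      rw [hB, Finset.mul_sum]
      exact Finset.sum_congr rfl fun i _ => by ring
    rw [e, ← hSdef, ← hU]
  have hden : ((m : ℝ)⁻¹ * ∑ j, ∑ i, (b i + w j i) ^ 2) = S + 2 * B + W := by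
    have h1 : ∀ j, (∑ i, (b i + w j i) ^ 2) = S + 2 * (∑ i, b i * w j i) + ∑ i, w j i ^ 2 := by
      intro j
      simp_rw [add_sq, Finset.sum_add_distrib, Finset.mul_sum]
      rw [← hSdef]
      congr 1
      congr 1
      exact Finset.sum_congr rfl fun i _ => by ring
    simp_rw [h1, Finset.sum_add_distrib, Finset.sum_const, Finset.card_univ, Fintype.card_fin,
      nsmul_eq_mul]
    have h2 : (∑ j, ∑ i, b i * w j i) = ∑ i, b i * ∑ j, w j i := by
      rw [Finset.sum_comm]
      simp_rw [Finset.mul_sum]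
    have h3 : B = (m:ℝ)⁻¹ * ∑ i, b i * ∑ j, w j i := by
      rw [hB, Finset.mul_sum]
      exact Finset.sum_congr rfl fun i _ => by rw [hu]; ring
    have e1 : (∑ x : Fin m, 2 * ∑ i, b i * w x i) = 2 * ∑ i, b i * ∑ j, w j i := by
      rw [← Finset.mul_sum, h2]
    rw [mul_add, mul_add, e1, ← mul_assoc, inv_mul_cancel₀ hm0, one_mul, ← hWdef, h3]
    ring
  have hUW : U ≤ W := by
    rw [hU, hWdef]
    exact Vstat_num_le_den w
  have hWc : W ≤ c2X := by
    rw [hWdef]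
    calc (m:ℝ)⁻¹ * ∑ j, ∑ i, w j i ^2 ≤ (m:ℝ)⁻¹ * ∑ j : Fin m, c2X := by
          apply mul_le_mul_of_nonneg_left (Finset.sum_le_sum fun j _ => hW j) (by positivity)
      _ = c2X := by
          rw [Finset.sum_const, Finset.card_univ, Fintype.card_fin, nsmul_eq_mul,
            ← mul_assoc, inv_mul_cancel₀ hm0, one_mul]
  have hBsq : B ^ 2 ≤ S * c2X := by
    calc B ^ 2 ≤ S * U := by
          simpa [hSdef, hU] using Finset.sum_mul_sq_le_sq_mul_sq Finset.univ b u
      _ ≤ S * c2X := by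
          apply mul_le_mul_of_nonneg_left (le_trans hUW hWc) hS.le
  have hBabs : |B| ≤ Real.sqrt (S * c2X) := by
    rw [← Real.sqrt_sq_eq_abs]
    exact Real.sqrt_le_sqrt hBsq
  unfold Vstat
  rw [hnum, hden]
  rcases le_or_gt (16 * c2X) S with hcase | hcase
  · -- good case
    have hsq : Real.sqrt (S * c2X) ≤ S / 4 := by
      have h4 : S * c2X ≤ (S / 4) ^ 2 := by nlinarith
      calc Real.sqrt (S * c2X) ≤ Real.sqrt ((S/4)^2) := Real.sqrt_le_sqrt h4
        _ = S / 4 := Real.sqrt_sq (by positivity)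
    have hDen : S / 2 ≤ S + 2 * B + W := by
      have hb1 : -(S/4) ≤ B := by
        have := (abs_le.1 hBabs).1; linarith
      have hW0 : 0 ≤ W := le_trans hU0 hUW
      linarith
    have hDpos : 0 < S + 2 * B + W := lt_of_lt_of_le (by positivity) hDen
    rw [one_sub_div (ne_of_gt hDpos)]
    have hdiff : S + 2 * B + W - (S + 2 * B + U) = W - U := by ring
    rw [hdiff]
    have h1 : (W - U) / (S + 2 * B + W) ≤ c2X / (S / 2) :=
      div_le_div₀ hc2X (by linarith) (by positivity) hDen
    have h2 : c2X / (S / 2) = 2 * c2X / S := by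
      field_simp
    have h3 : 0 ≤ 256 * c2X ^ 2 / S ^ 2 := by positivity
    rw [h2] at h1
    linarith
  · -- bad case
    have hnum0 : 0 ≤ S + 2 * B + U := by
      have h0 : (0:ℝ) ≤ ∑ i, ((m : ℝ)⁻¹ * ∑ j, (b i + w j i)) ^ 2 := by positivity
      rw [hnum] at h0; exact h0
    have hden0 : 0 ≤ S + 2 * B + W := by linarith [hUW]
    have hV1 : 1 - (S + 2 * B + U) / (S + 2 * B + W) ≤ 1 := by
      have h0 : 0 ≤ (S + 2 * B + U) / (S + 2 * B + W) := div_nonneg hnum0 hden0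
      linarith
    have h1 : (1:ℝ) ≤ 256 * c2X ^ 2 / S ^ 2 := by
      rw [le_div_iff₀ (by positivity)]
      nlinarith
    have h2 : 0 ≤ 2 * c2X / S := div_nonneg (by linarith) hS.le
    linarith

lemma mulvec_sq_le {d q : ℕ} (M : Matrix (Fin d) (Fin q) ℝ) (x : Fin q → ℝ) :
    ∑ i, (M *ᵥ x) i ^ 2 ≤ (∑ i, ∑ k, M i k ^ 2) * ∑ k, x k ^ 2 := by
  have h : ∀ i : Fin d, (M *ᵥ x) i ^ 2 ≤ (∑ k, M i k ^ 2) * ∑ k, x k ^ 2 := by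
    intro i
    have : (M *ᵥ x) i = ∑ k, M i k * x k := rfl
    rw [this]
    exact Finset.sum_mul_sq_le_sq_mul_sq Finset.univ _ _
  calc ∑ i, (M *ᵥ x) i ^ 2 ≤ ∑ i, (∑ k, M i k ^ 2) * ∑ k, x k ^ 2 :=
        Finset.sum_le_sum fun i _ => h i
    _ = (∑ i, ∑ k, M i k ^ 2) * ∑ k, x k ^ 2 := by rw [Finset.sum_mul]

lemma int_le_sqrt_int_sq {α : Type*} [MeasurableSpace α] (μ : Measure α)
    [IsProbabilityMeasure μ] (f : α → ℝ) (hf : ∀ a, 0 ≤ f a)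
    (h1 : Integrable f μ) (h2 : Integrable (fun a => f a ^ 2) μ) :
    ∫ a, f a ∂μ ≤ Real.sqrt (∫ a, f a ^ 2 ∂μ) := by
  set c := ∫ a, f a ∂μ with hc
  have h0 : 0 ≤ c := integral_nonneg hf
  have hvar : 0 ≤ ∫ a, (f a - c) ^ 2 ∂μ := integral_nonneg fun a => sq_nonneg _
  have hexp : ∫ a, (f a - c) ^ 2 ∂μ = (∫ a, f a ^ 2 ∂μ) - c ^ 2 := by
    have he : (fun a => (f a - c) ^ 2) = fun a => f a ^ 2 - (2 * c) * f a + c ^ 2 := by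
      ext a; ring
    have hi1 : Integrable (fun a => f a ^ 2 - 2 * c * f a) μ := h2.sub (h1.const_mul (2*c))
    have hi2 : Integrable (fun a => 2 * c * f a) μ := h1.const_mul (2*c)
    rw [he, integral_add hi1 (integrable_const _), integral_sub h2 hi2,
      integral_const_mul, integral_const]
    simp [← hc]
    ring
  have hsq : c ^ 2 ≤ ∫ a, f a ^ 2 ∂μ := by
    rw [hexp] at hvar; linarith
  calc c = Real.sqrt (c ^ 2) := (Real.sqrt_sq h0).symm
    _ ≤ Real.sqrt (∫ a, f a ^ 2 ∂μ) := Real.sqrt_le_sqrt hsq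


/-- with `β̂_j⁽ⁿ⁾ = β_n + C(S_j) γ⁽ⁿ⁾`, `γ⁽ⁿ⁾` spherically symmetric with
`E‖γ⁽ⁿ⁾‖⁴ ≤ K ρ_n⁴/q²`, `β_n ≠ 0` and `ρ_n/‖β_n‖ → 0`,
then `E[𝒱(β̂₁⁽ⁿ⁾, …, β̂_m⁽ⁿ⁾)] → 0` as `n → ∞`. -/
theorem stmt_10 (m d q : ℕ) (hm : 2 ≤ m) (hd : 1 ≤ d) (hq : 1 ≤ q)
    (K : ℝ) (hK : 0 < K) (C : Fin m → Matrix (Fin d) (Fin q) ℝ)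
    (β : ℕ → Fin d → ℝ) (hβ : ∀ n, β n ≠ 0)
    (ρ : ℕ → ℝ) (hρ : ∀ n, 0 < ρ n)
    (μ : ℕ → Measure (Fin q → ℝ)) (hprob : ∀ n, IsProbabilityMeasure (μ n))
    (hsph : ∀ n, SphericallySymmetric (μ n))
    (hint : ∀ n, Integrable (fun x => (∑ i, x i ^ 2) ^ 2) (μ n))
    (hmom : ∀ n, ∫ x, (∑ i, x i ^ 2) ^ 2 ∂(μ n) ≤ K * ρ n ^ 4 / q ^ 2)
    (hratio : Tendsto (fun n => ρ n / Real.sqrt (∑ i, β n i ^ 2)) atTop (nhds 0)) :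
    Tendsto (fun n => ∫ x, Vstat (fun j i => β n i + (C j *ᵥ x) i) ∂(μ n))
      atTop (nhds 0) := by
  have hm0 : 0 < m := lt_of_lt_of_le (by norm_num) hm
  have hq0 : (0:ℝ) < q := by exact_mod_cast hq
  set S : ℕ → ℝ := fun n => ∑ i, β n i ^ 2 with hSdef
  have hSpos : ∀ n, 0 < S n := by
    intro n
    by_contra hcon
    push_neg at hcon
    have h0 : S n = 0 := le_antisymm hcon (Finset.sum_nonneg fun i _ => sq_nonneg _)
    apply hβ n
    funext i
    have hz := (Finset.sum_eq_zero_iff_of_nonneg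
      (fun i _ => sq_nonneg (β n i))).1 h0 i (Finset.mem_univ i)
    exact pow_eq_zero_iff two_ne_zero |>.1 hz
  set c2 : ℝ := ∑ j, ∑ i, ∑ k, (C j i k) ^ 2 with hc2def
  have hc2 : 0 ≤ c2 := by positivity
  set X : (Fin q → ℝ) → ℝ := fun x => ∑ i, x i ^ 2 with hXdef
  have hXnn : ∀ x, 0 ≤ X x := fun x => Finset.sum_nonneg fun i _ => sq_nonneg _
  have hXmeas : Measurable X := by
    apply Finset.measurable_sum
    intro i _
    exact (measurable_pi_apply i).pow_const 2
  have hXint : ∀ n, Integrable X (μ n) := by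
    intro n
    have := hprob n
    have hbd : Integrable (fun x => 1 + X x ^ 2) (μ n) := (integrable_const 1).add (hint n)
    refine hbd.mono' hXmeas.aestronglyMeasurable (ae_of_all _ fun x => ?_)
    rw [Real.norm_of_nonneg (hXnn x)]
    nlinarith [sq_nonneg (X x - 1), hXnn x]
  -- expectation bounds
  have hEX2 : ∀ n, ∫ x, X x ^ 2 ∂(μ n) ≤ K * ρ n ^ 4 / q ^ 2 := hmom
  have hEX : ∀ n, ∫ x, X x ∂(μ n) ≤ Real.sqrt K * ρ n ^ 2 / q := by
    intro n
    have := hprob n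
    have h1 : ∫ x, X x ∂(μ n) ≤ Real.sqrt (∫ x, X x ^ 2 ∂(μ n)) :=
      int_le_sqrt_int_sq (μ n) X hXnn (hXint n) (hint n)
    have h2 : Real.sqrt (∫ x, X x ^ 2 ∂(μ n)) ≤ Real.sqrt (K * ρ n ^ 4 / q ^ 2) :=
      Real.sqrt_le_sqrt (hEX2 n)
    have h3 : K * ρ n ^ 4 / (q:ℝ) ^ 2 = K * (ρ n ^ 2 / q) ^ 2 := by
      ring
    have h4 : Real.sqrt (K * ρ n ^ 4 / q ^ 2) = Real.sqrt K * (ρ n ^ 2 / q) := by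
      rw [h3, Real.sqrt_mul hK.le, Real.sqrt_sq (by positivity)]
    calc ∫ x, X x ∂(μ n) ≤ Real.sqrt (K * ρ n ^ 4 / q ^ 2) := le_trans h1 h2
      _ = Real.sqrt K * ρ n ^ 2 / q := by rw [h4]; ring
  -- pointwise bound
  have hpt : ∀ n x, Vstat (fun j i => β n i + (C j *ᵥ x) i) ≤
      (2 * c2 / S n) * X x + (256 * c2 ^ 2 / (S n) ^ 2) * X x ^ 2 := by
    intro n x
    have hW : ∀ j, ∑ i, (C j *ᵥ x) i ^ 2 ≤ c2 * X x := by
      intro j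
      calc ∑ i, (C j *ᵥ x) i ^ 2 ≤ (∑ i, ∑ k, C j i k ^ 2) * ∑ k, x k ^ 2 :=
            mulvec_sq_le (C j) x
        _ ≤ c2 * X x := by
            apply mul_le_mul_of_nonneg_right _ (hXnn x)
            exact Finset.single_le_sum (f := fun j => ∑ i, ∑ k, (C j i k)^2)
              (fun j _ => by positivity) (Finset.mem_univ j)
    have := key_bound hm0 (β n) (hSpos n) (fun j => (C j *ᵥ x)) (c2 * X x) hW
    calc Vstat (fun j i => β n i + (C j *ᵥ x) i) ≤
          2 * (c2 * X x) / S n + 256 * (c2 * X x) ^ 2 / (S n) ^ 2 := this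
      _ = (2 * c2 / S n) * X x + (256 * c2 ^ 2 / (S n) ^ 2) * X x ^ 2 := by ring
  -- integral bound
  set r : ℕ → ℝ := fun n => ρ n / Real.sqrt (S n) with hrdef
  have hr2 : ∀ n, r n ^ 2 = ρ n ^ 2 / S n := by
    intro n
    rw [hrdef]
    rw [div_pow, Real.sq_sqrt (hSpos n).le]
  have hr4 : ∀ n, r n ^ 4 = ρ n ^ 4 / (S n) ^ 2 := by
    intro n
    have : r n ^ 4 = (r n ^ 2) ^ 2 := by ring
    rw [this, hr2, div_pow]
    congr 1
    ring
  set A : ℝ := 2 * c2 * Real.sqrt K / q with hAdef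
  set B : ℝ := 256 * c2 ^ 2 * K / q ^ 2 with hBdef
  have hub : ∀ n, ∫ x, Vstat (fun j i => β n i + (C j *ᵥ x) i) ∂(μ n) ≤
      A * r n ^ 2 + B * r n ^ 4 := by
    intro n
    have := hprob n
    have hgint : Integrable (fun x => (2 * c2 / S n) * X x +
        (256 * c2 ^ 2 / (S n) ^ 2) * X x ^ 2) (μ n) :=
      ((hXint n).const_mul _).add ((hint n).const_mul _)
    have h1 : ∫ x, Vstat (fun j i => β n i + (C j *ᵥ x) i) ∂(μ n) ≤
        ∫ x, ((2 * c2 / S n) * X x + (256 * c2 ^ 2 / (S n) ^ 2) * X x ^ 2) ∂(μ n) :=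
      integral_mono_of_nonneg (ae_of_all _ fun x => Vstat_nonneg _) hgint
        (ae_of_all _ fun x => hpt n x)
    have h2 : ∫ x, ((2 * c2 / S n) * X x + (256 * c2 ^ 2 / (S n) ^ 2) * X x ^ 2) ∂(μ n) =
        (2 * c2 / S n) * ∫ x, X x ∂(μ n) +
        (256 * c2 ^ 2 / (S n) ^ 2) * ∫ x, X x ^ 2 ∂(μ n) := by
      rw [integral_add ((hXint n).const_mul _) ((hint n).const_mul _),
        integral_const_mul, integral_const_mul]
    have h3 : (2 * c2 / S n) * ∫ x, X x ∂(μ n) ≤ (2 * c2 / S n) * (Real.sqrt K * ρ n ^ 2 / q) :=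
      mul_le_mul_of_nonneg_left (hEX n) (by positivity)
    have h4 : (256 * c2 ^ 2 / (S n) ^ 2) * ∫ x, X x ^ 2 ∂(μ n) ≤
        (256 * c2 ^ 2 / (S n) ^ 2) * (K * ρ n ^ 4 / q ^ 2) :=
      mul_le_mul_of_nonneg_left (hEX2 n) (by positivity)
    have h5 : (2 * c2 / S n) * (Real.sqrt K * ρ n ^ 2 / q) = A * r n ^ 2 := by
      rw [hAdef, hr2]
      field_simp
    have h6 : (256 * c2 ^ 2 / (S n) ^ 2) * (K * ρ n ^ 4 / q ^ 2) = B * r n ^ 4 := by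
      rw [hBdef, hr4]
      field_simp
    rw [h2] at h1
    linarith
  have hlb : ∀ n, 0 ≤ ∫ x, Vstat (fun j i => β n i + (C j *ᵥ x) i) ∂(μ n) :=
    fun n => integral_nonneg fun x => Vstat_nonneg _
  have hlim : Tendsto (fun n => A * r n ^ 2 + B * r n ^ 4) atTop (nhds 0) := by
    have h2 : Tendsto (fun n => r n ^ 2) atTop (nhds 0) := by
      simpa using hratio.pow 2
    have h4 : Tendsto (fun n => r n ^ 4) atTop (nhds 0) := by
      simpa using hratio.pow 4
    simpa using (h2.const_mul A).add (h4.const_mul B)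
  exact squeeze_zero hlb hub hlim
end

section
/- Persistence of partial correlation under one hidden confounder despite no causal effect. Let q ≥ 2, a ∈ ℝ^q, γ ∈ ℝ^q, σ_x, σ_y > 0. Let Z, N_x, N_y be zero-mean random variables and N_w a zero-mean random vector in ℝ^q, all mutually uncorrelated, with Var(Z) = 1, Var(N_x) = σ_x², Cov(N_w) = I_q, Var(N_y) = σ_y². Set X = Z + N_x, W = aZ + N_w, and Y = γ^⊤W + N_y (so the causal coefficient of X on Y is zero). Write W_{−1} = (W_2,…,W_q), a_{−1} = (a_2,…,a_q). Define the population linear-regression residuals R_X = X − Cov(X, W_{−1}) Var(W_{−1})^{−1} W_{−1} and R_Y = Y − Cov(Y, W_{−1}) Var(W_{−1})^{−1} W_{−1}. Then E[R_X R_Y] = a_1 γ_1 / (1 + ‖a_{−1}‖²). In particular, if a_1 γ_1 ≠ 0, the partial covariance (and hence the partial correlation) of X and Y given W_{−1} is nonzero even though X has no causal effect on Y. -/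
open MeasureTheory Matrix Filter

private lemma l2_mul_integrable {Ω : Type*} [MeasurableSpace Ω] {P : Measure Ω}
    {f g : Ω → ℝ} (hf : MemLp f 2 P) (hg : MemLp g 2 P) :
    Integrable (fun ω => f ω * g ω) P := by
  have h := hg.smul (φ := f) hf (p := 2) (q := 2) (r := 1)
    (hpqr := ⟨by simp [one_div, ENNReal.inv_two_add_inv_two]⟩)
  rw [memLp_one_iff_integrable] at h
  exact h

private lemma integral_combo_diag {Ω : Type*} [MeasurableSpace Ω] (P : Measure Ω)
    {ι : Type*} [Fintype ι] [DecidableEq ι] (e : ι → Ω → ℝ)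
    (he : ∀ t, MemLp (e t) 2 P) (g : ι → ℝ)
    (hG : ∀ t t', ∫ ω, e t ω * e t' ω ∂P = if t = t' then g t else 0)
    (c d : ι → ℝ) :
    ∫ ω, (∑ t, c t * e t ω) * (∑ t, d t * e t ω) ∂P = ∑ t, c t * d t * g t := by
  have hrw : ∀ ω, (∑ t, c t * e t ω) * (∑ t, d t * e t ω)
      = ∑ t, ∑ t', c t * d t' * (e t ω * e t' ω) := by
    intro ω
    rw [Finset.sum_mul_sum]
    exact Finset.sum_congr rfl fun t _ => Finset.sum_congr rfl fun t' _ => by ring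
  simp_rw [hrw]
  rw [integral_finset_sum]
  · have h1 : ∀ t, ∫ ω, (∑ t', c t * d t' * (e t ω * e t' ω)) ∂P
        = ∑ t', c t * d t' * ∫ ω, e t ω * e t' ω ∂P := by
      intro t
      rw [integral_finset_sum]
      · exact Finset.sum_congr rfl fun t' _ => integral_const_mul _ _
      · exact fun t' _ => (l2_mul_integrable (he t) (he t')).const_mul _
    simp_rw [h1, hG]
    refine Finset.sum_congr rfl fun t _ => ?_
    rw [Finset.sum_eq_single t]
    · simp
    · intro b _ hb
      simp [(Ne.symm hb : t ≠ b)]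
    · intro h; exact absurd (Finset.mem_univ t) h
  · intro t _
    exact integrable_finset_sum _ fun t' _ => (l2_mul_integrable (he t) (he t')).const_mul _

set_option maxHeartbeats 1000000 in
/-- persistence of partial correlation under one hidden confounder despite no
causal effect.  With `X = Z + N_x`, `W = aZ + N_w`, `Y = γ⊤W + N_y` (zero-mean, mutually
uncorrelated noises, `Var Z = 1`, `Var N_x = σ_x²`, `Cov N_w = I`, `Var N_y = σ_y²`), and
population linear-regression residuals `R_X, R_Y` of `X, Y` on `W_{-1}` (all coordinates of
`W` except the first one, indexed by `z`), one has `E[R_X R_Y] = a_1 γ_1 / (1 + ‖a_{-1}‖²)`;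
in particular if `a_1 γ_1 ≠ 0` the partial covariance (hence the partial correlation) of `X`
and `Y` given `W_{-1}` is nonzero even though `X` has no causal effect on `Y`. -/
theorem stmt_13 {Ω : Type*} [MeasurableSpace Ω] (P : Measure Ω) [IsProbabilityMeasure P]
    (q : ℕ) (hq : 2 ≤ q) (z : Fin q) (hz : (z : ℕ) = 0)
    (a γ : Fin q → ℝ) (σx σy : ℝ) (hσx : 0 < σx) (hσy : 0 < σy)
    (Z Nx Ny : Ω → ℝ) (Nw : Ω → Fin q → ℝ)
    (hL2Z : MemLp Z 2 P) (hL2x : MemLp Nx 2 P) (hL2y : MemLp Ny 2 P)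
    (hL2w : ∀ i, MemLp (fun ω => Nw ω i) 2 P)
    (hmZ : ∫ ω, Z ω ∂P = 0) (hmx : ∫ ω, Nx ω ∂P = 0) (hmy : ∫ ω, Ny ω ∂P = 0)
    (hmw : ∀ i, ∫ ω, Nw ω i ∂P = 0)
    (hZx : ∫ ω, Z ω * Nx ω ∂P = 0) (hZy : ∫ ω, Z ω * Ny ω ∂P = 0)
    (hxy : ∫ ω, Nx ω * Ny ω ∂P = 0)
    (hZw : ∀ i, ∫ ω, Z ω * Nw ω i ∂P = 0)
    (hxw : ∀ i, ∫ ω, Nx ω * Nw ω i ∂P = 0)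
    (hyw : ∀ i, ∫ ω, Ny ω * Nw ω i ∂P = 0)
    (hvZ : ∫ ω, Z ω ^ 2 ∂P = 1) (hvx : ∫ ω, Nx ω ^ 2 ∂P = σx ^ 2)
    (hvy : ∫ ω, Ny ω ^ 2 ∂P = σy ^ 2)
    (hvw : ∀ i j, ∫ ω, Nw ω i * Nw ω j ∂P = if i = j then 1 else 0)
    (X : Ω → ℝ) (hX : X = fun ω => Z ω + Nx ω)
    (Wf : Ω → Fin q → ℝ) (hW : Wf = fun ω i => a i * Z ω + Nw ω i)
    (Y : Ω → ℝ) (hY : Y = fun ω => (∑ i, γ i * Wf ω i) + Ny ω)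
    (V : Matrix {i : Fin q // i ≠ z} {i : Fin q // i ≠ z} ℝ)
    (hV : V = Matrix.of fun i j => ∫ ω, Wf ω i.1 * Wf ω j.1 ∂P)
    (cX : {i : Fin q // i ≠ z} → ℝ)
    (hcX : cX = fun i => ∫ ω, X ω * Wf ω i.1 ∂P)
    (cY : {i : Fin q // i ≠ z} → ℝ)
    (hcY : cY = fun i => ∫ ω, Y ω * Wf ω i.1 ∂P)
    (RX : Ω → ℝ)
    (hRX : RX = fun ω => X ω - cX ⬝ᵥ (V⁻¹ *ᵥ fun i => Wf ω i.1))
    (RY : Ω → ℝ)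
    (hRY : RY = fun ω => Y ω - cY ⬝ᵥ (V⁻¹ *ᵥ fun i => Wf ω i.1)) :
    (∫ ω, RX ω * RY ω ∂P =
      a z * γ z / (1 + ∑ i : {i : Fin q // i ≠ z}, a i.1 ^ 2))
    ∧ (a z * γ z ≠ 0 → ∫ ω, RX ω * RY ω ∂P ≠ 0) := by
  classical
  subst hX hW hY
  simp only [] at hV hcX hcY hRX hRY
  set s : ℝ := ∑ i : {i : Fin q // i ≠ z}, a i.1 ^ 2 with hsdef
  have hs0 : 0 ≤ s := Finset.sum_nonneg fun i _ => sq_nonneg _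
  have h1s : (1 : ℝ) + s ≠ 0 := by positivity
  have hinv : (1 / (1 + s)) * (1 + s) = 1 := by field_simp
  set c : ℝ := a z * γ z / (1 + s) with hcdef
  have hc' : c * (1 + s) = a z * γ z := by rw [hcdef]; field_simp
  -- the orthogonal basis
  set e : (Fin q ⊕ Fin 3) → Ω → ℝ := Sum.elim (fun i ω => Nw ω i) ![Z, Nx, Ny] with hedef
  have he : ∀ t, MemLp (e t) 2 P := by
    rintro (i | j)
    · exact hL2w i
    · fin_cases j
      · simpa [hedef] using hL2Z
      · simpa [hedef] using hL2x
      · simpa [hedef] using hL2y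
  set g : (Fin q ⊕ Fin 3) → ℝ := Sum.elim (fun _ => 1) ![1, σx ^ 2, σy ^ 2] with hgdef
  have hcomm : ∀ f h : Ω → ℝ, ∫ ω, f ω * h ω ∂P = ∫ ω, h ω * f ω ∂P := by
    intro f h
    have h' : (fun ω => f ω * h ω) = fun ω => h ω * f ω := by funext ω; ring
    rw [h']
  have hsq : ∀ f : Ω → ℝ, (∫ ω, f ω * f ω ∂P) = ∫ ω, f ω ^ 2 ∂P := by
    intro f
    have h' : (fun ω => f ω * f ω) = fun ω => f ω ^ 2 := by funext ω; ring
    rw [h']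
  have hGr : ∀ j j' : Fin 3,
      ∫ ω, (![Z, Nx, Ny] j) ω * (![Z, Nx, Ny] j') ω ∂P
        = if j = j' then (![(1 : ℝ), σx ^ 2, σy ^ 2] j) else 0 := by
    intro j j'
    fin_cases j <;> fin_cases j' <;> simp <;>
      first
        | (rw [hsq]; assumption)
        | assumption
        | (rw [hcomm]; assumption)
  have hGm : ∀ (i : Fin q) (j : Fin 3), ∫ ω, (![Z, Nx, Ny] j) ω * Nw ω i ∂P = 0 := by
    intro i j
    fin_cases j
    · simpa using hZw i
    · simpa using hxw i
    · simpa using hyw i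
  have hGm' : ∀ (i : Fin q) (j : Fin 3), ∫ ω, Nw ω i * (![Z, Nx, Ny] j) ω ∂P = 0 := by
    intro i j
    rw [hcomm]
    exact hGm i j
  have hG : ∀ t t', ∫ ω, e t ω * e t' ω ∂P = if t = t' then g t else 0 := by
    rintro (i | j) (i' | j')
    · show ∫ ω, Nw ω i * Nw ω i' ∂P = _
      rw [hvw i i']
      by_cases h : i = i' <;> simp [h, hgdef]
    · rw [show (if (Sum.inl i : Fin q ⊕ Fin 3) = Sum.inr j' then g (Sum.inl i) else 0) = 0
        from by simp]
      exact hGm' i j'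
    · rw [show (if (Sum.inr j : Fin q ⊕ Fin 3) = Sum.inl i' then g (Sum.inr j) else 0) = 0
        from by simp]
      exact hGm i' j
    · by_cases h : j = j'
      · subst h
        rw [if_pos rfl]
        exact (hGr j j).trans (by rw [if_pos rfl]; rfl)
      · rw [if_neg (by simpa using h)]
        exact (hGr j j').trans (by rw [if_neg h])
  -- splitting sums over `Fin q`
  have hsplit : ∀ f : Fin q → ℝ, ∑ i, f i = f z + ∑ i : {i : Fin q // i ≠ z}, f i.1 := by
    intro f
    rw [← Finset.add_sum_erase Finset.univ f (Finset.mem_univ z)]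
    congr 1
    exact Finset.sum_subtype _ (by simp [Finset.mem_erase]) f
  set ga : ℝ := ∑ k, γ k * a k with hgadef
  -- coefficient vectors
  set cW : Fin q → (Fin q ⊕ Fin 3) → ℝ :=
    fun i => Sum.elim (fun j => if j = i then 1 else 0) ![a i, 0, 0] with hcWdef
  set cXc : (Fin q ⊕ Fin 3) → ℝ := Sum.elim (fun _ => 0) ![1, 1, 0] with hcXcdef
  set cYc : (Fin q ⊕ Fin 3) → ℝ := Sum.elim (fun j => γ j) ![ga, 0, 1] with hcYcdef
  have hWe : ∀ ω i, a i * Z ω + Nw ω i = ∑ t, cW i t * e t ω := by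
    intro ω i
    rw [Fintype.sum_sum_type, Fin.sum_univ_three]
    simp only [hcWdef, hedef, Sum.elim_inl, Sum.elim_inr, Matrix.cons_val_zero,
      Matrix.cons_val_one, Matrix.head_cons, Matrix.cons_val_two, Matrix.tail_cons, ite_mul,
      one_mul, zero_mul]
    rw [Finset.sum_ite_eq' Finset.univ i]
    simp
    ring
  have hXe : ∀ ω, Z ω + Nx ω = ∑ t, cXc t * e t ω := by
    intro ω
    rw [Fintype.sum_sum_type, Fin.sum_univ_three]
    simp only [hcXcdef, hedef, Sum.elim_inl, Sum.elim_inr, Matrix.cons_val_zero,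
      Matrix.cons_val_one, Matrix.head_cons, Matrix.cons_val_two, Matrix.tail_cons,
      one_mul, zero_mul]
    simp
  have hYe : ∀ ω, (∑ i, γ i * (a i * Z ω + Nw ω i)) + Ny ω = ∑ t, cYc t * e t ω := by
    intro ω
    rw [Fintype.sum_sum_type, Fin.sum_univ_three]
    simp only [hcYcdef, hedef, Sum.elim_inl, Sum.elim_inr, Matrix.cons_val_zero,
      Matrix.cons_val_one, Matrix.head_cons, Matrix.cons_val_two, Matrix.tail_cons,
      one_mul, zero_mul]
    have hb : ∀ i, γ i * (a i * Z ω + Nw ω i) = Z ω * (γ i * a i) + γ i * Nw ω i := by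
      intro i; ring
    rw [Finset.sum_congr rfl fun i _ => hb i, Finset.sum_add_distrib, ← Finset.mul_sum,
      ← hgadef]
    ring
  -- values of V, cX, cY
  have hVval : ∀ i j : {i : Fin q // i ≠ z},
      V i j = a i.1 * a j.1 + if i = j then 1 else 0 := by
    intro i j
    rw [hV]
    simp only [Matrix.of_apply]
    simp_rw [hWe]
    rw [integral_combo_diag P e he g hG]
    rw [Fintype.sum_sum_type, Fin.sum_univ_three]
    simp only [hcWdef, hgdef, Sum.elim_inl, Sum.elim_inr, Matrix.cons_val_zero,
      Matrix.cons_val_one, Matrix.head_cons, Matrix.cons_val_two, Matrix.tail_cons]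
    have hb : ∀ k, (if k = i.1 then (1:ℝ) else 0) * (if k = j.1 then 1 else 0) * 1
        = if k = i.1 then (if k = j.1 then (1:ℝ) else 0) else 0 := by
      intro k; split_ifs <;> ring
    rw [Finset.sum_congr rfl fun k _ => hb k, Finset.sum_ite_eq' Finset.univ i.1]
    simp only [Finset.mem_univ, if_true]
    have : (if i.1 = j.1 then (1:ℝ) else 0) = if i = j then 1 else 0 := by
      by_cases h : i = j
      · simp [h]
      · rw [if_neg h, if_neg (fun hh => h (Subtype.ext hh))]
    rw [this]; ring
  have hcXval : ∀ i, cX i = a i.1 := by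
    intro i
    rw [hcX]
    simp only []
    simp_rw [hXe, hWe]
    rw [integral_combo_diag P e he g hG]
    rw [Fintype.sum_sum_type, Fin.sum_univ_three]
    simp [hcXcdef, hcWdef, hgdef]
  have hcYval : ∀ i, cY i = ga * a i.1 + γ i.1 := by
    intro i
    rw [hcY]
    simp only []
    simp_rw [hYe, hWe]
    rw [integral_combo_diag P e he g hG]
    rw [Fintype.sum_sum_type, Fin.sum_univ_three]
    simp only [hcYcdef, hcWdef, hgdef, Sum.elim_inl, Sum.elim_inr, Matrix.cons_val_zero,
      Matrix.cons_val_one, Matrix.head_cons, Matrix.cons_val_two, Matrix.tail_cons]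
    have hb : ∀ k, γ k * (if k = i.1 then (1:ℝ) else 0) * 1
        = if k = i.1 then γ k else 0 := by
      intro k; split_ifs <;> ring
    rw [Finset.sum_congr rfl fun k _ => hb k, Finset.sum_ite_eq' Finset.univ i.1]
    simp only [Finset.mem_univ, if_true]
    ring
  -- the inverse matrix (Sherman–Morrison)
  set M : Matrix {i : Fin q // i ≠ z} {i : Fin q // i ≠ z} ℝ :=
    Matrix.of fun i j => (if i = j then 1 else 0) - a i.1 * a j.1 / (1 + s) with hMdef
  have hVM : V * M = 1 := by
    ext i j
    rw [Matrix.mul_apply, Matrix.one_apply]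
    have hbody : ∀ k, V i k * M k j
        = (if k = j then a i.1 * a k.1 + (if i = k then (1:ℝ) else 0) else 0)
          + (if i = k then -(a k.1 * a j.1 / (1 + s)) else 0)
          - (a i.1 * a j.1 / (1 + s)) * a k.1 ^ 2 := by
      intro k
      rw [hVval i k]
      simp only [hMdef, Matrix.of_apply]
      split_ifs <;> ring
    rw [Finset.sum_congr rfl fun k _ => hbody k]
    rw [Finset.sum_sub_distrib, Finset.sum_add_distrib,
      Finset.sum_ite_eq' Finset.univ j, Finset.sum_ite_eq Finset.univ i,
      ← Finset.mul_sum, ← hsdef]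
    simp only [Finset.mem_univ, if_true]
    have key : a i.1 * a j.1 + -(a i.1 * a j.1 / (1 + s)) - a i.1 * a j.1 / (1 + s) * s = 0 := by
      field_simp
      ring
    by_cases h : i = j
    · subst h
      simp only [if_pos rfl]
      linarith [key]
    · simp only [if_neg h]
      linarith [key]
  have hMinv : V⁻¹ = M := Matrix.inv_eq_right_inv hVM
  -- the regression parts
  have hdotX : ∀ ω, cX ⬝ᵥ (M *ᵥ fun i => a i.1 * Z ω + Nw ω i.1)
      = ∑ j : {i : Fin q // i ≠ z}, a j.1 / (1 + s) * (a j.1 * Z ω + Nw ω j.1) := by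
    intro ω
    rw [dotProduct]
    simp_rw [Matrix.mulVec, dotProduct, hcXval, Finset.mul_sum]
    rw [Finset.sum_comm]
    refine Finset.sum_congr rfl fun j _ => ?_
    simp_rw [← mul_assoc]
    rw [← Finset.sum_mul]
    congr 1
    have hb : ∀ i : {i : Fin q // i ≠ z}, a i.1 * M i j
        = (if i = j then a i.1 else 0) - a j.1 / (1 + s) * a i.1 ^ 2 := by
      intro i; simp only [hMdef, Matrix.of_apply]; split_ifs <;> ring
    rw [Finset.sum_congr rfl fun i _ => hb i, Finset.sum_sub_distrib,
      Finset.sum_ite_eq' Finset.univ j, ← Finset.mul_sum, ← hsdef]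
    simp only [Finset.mem_univ, if_true]
    field_simp
    ring
  have hga2 : ga = γ z * a z + ∑ j : {i : Fin q // i ≠ z}, γ j.1 * a j.1 :=
    hsplit fun k => γ k * a k
  have hdotY : ∀ ω, cY ⬝ᵥ (M *ᵥ fun i => a i.1 * Z ω + Nw ω i.1)
      = ∑ j : {i : Fin q // i ≠ z}, (γ j.1 + c * a j.1) * (a j.1 * Z ω + Nw ω j.1) := by
    intro ω
    rw [dotProduct]
    simp_rw [Matrix.mulVec, dotProduct, hcYval, Finset.mul_sum]
    rw [Finset.sum_comm]
    refine Finset.sum_congr rfl fun j _ => ?_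
    simp_rw [← mul_assoc]
    rw [← Finset.sum_mul]
    congr 1
    have hb : ∀ i : {i : Fin q // i ≠ z}, (ga * a i.1 + γ i.1) * M i j
        = (if i = j then ga * a i.1 + γ i.1 else 0)
          - (ga * (a j.1 / (1 + s)) * a i.1 ^ 2 + (a j.1 / (1 + s)) * (γ i.1 * a i.1)) := by
      intro i; simp only [hMdef, Matrix.of_apply]; split_ifs <;> ring
    rw [Finset.sum_congr rfl fun i _ => hb i, Finset.sum_sub_distrib,
      Finset.sum_ite_eq' Finset.univ j, Finset.sum_add_distrib,
      ← Finset.mul_sum, ← Finset.mul_sum, ← hsdef]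
    simp only [Finset.mem_univ, if_true]
    have hG2 : ∑ j : {i : Fin q // i ≠ z}, γ j.1 * a j.1 = ga - γ z * a z := by
      linarith [hga2]
    rw [hG2]
    rw [hcdef]
    field_simp
    ring
  -- residuals as combinations
  set cRXc : (Fin q ⊕ Fin 3) → ℝ :=
    Sum.elim (fun i => if i = z then 0 else -(a i / (1 + s))) ![1 / (1 + s), 1, 0] with hcRXcdef
  set cRYc : (Fin q ⊕ Fin 3) → ℝ :=
    Sum.elim (fun i => if i = z then γ z else -(c * a i)) ![c, 0, 1] with hcRYcdef
  have hRXe : RX = fun ω => ∑ t, cRXc t * e t ω := by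
    funext ω
    rw [hRX]
    simp only []
    rw [hMinv, hdotX ω]
    rw [Fintype.sum_sum_type, Fin.sum_univ_three]
    simp only [hcRXcdef, hedef, Sum.elim_inl, Sum.elim_inr, Matrix.cons_val_zero,
      Matrix.cons_val_one, Matrix.head_cons, Matrix.cons_val_two, Matrix.tail_cons,
      one_mul, zero_mul]
    rw [hsplit fun i => (if i = z then 0 else -(a i / (1 + s))) * Nw ω i]
    simp only [eq_self_iff_true, if_true, zero_mul]
    have hb1 : ∀ j : {i : Fin q // i ≠ z},
        (if j.1 = z then 0 else -(a j.1 / (1 + s))) * Nw ω j.1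
        = -(a j.1 / (1 + s) * Nw ω j.1) := by
      intro j; rw [if_neg j.2]; ring
    rw [Finset.sum_congr rfl fun j _ => hb1 j]
    have hb2 : ∀ j : {i : Fin q // i ≠ z},
        a j.1 / (1 + s) * (a j.1 * Z ω + Nw ω j.1)
        = (Z ω * (1 / (1 + s))) * a j.1 ^ 2 + a j.1 / (1 + s) * Nw ω j.1 := by
      intro j; field_simp
    rw [Finset.sum_congr rfl fun j _ => hb2 j, Finset.sum_add_distrib, ← Finset.mul_sum,
      ← hsdef]
    rw [Finset.sum_neg_distrib]
    have hZ' : Z ω - Z ω * (1 / (1 + s)) * s = 1 / (1 + s) * Z ω := by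
      field_simp; ring
    linarith [hZ']
  have hRYe : RY = fun ω => ∑ t, cRYc t * e t ω := by
    funext ω
    rw [hRY]
    simp only []
    rw [hMinv, hdotY ω]
    rw [Fintype.sum_sum_type, Fin.sum_univ_three]
    simp only [hcRYcdef, hedef, Sum.elim_inl, Sum.elim_inr, Matrix.cons_val_zero,
      Matrix.cons_val_one, Matrix.head_cons, Matrix.cons_val_two, Matrix.tail_cons,
      one_mul, zero_mul]
    rw [hsplit fun i => (if i = z then γ z else -(c * a i)) * Nw ω i]
    simp only [eq_self_iff_true, if_true]
    have hb1 : ∀ j : {i : Fin q // i ≠ z},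
        (if j.1 = z then γ z else -(c * a j.1)) * Nw ω j.1
        = -(c * (a j.1 * Nw ω j.1)) := by
      intro j; rw [if_neg j.2]; ring
    rw [Finset.sum_congr rfl fun j _ => hb1 j, Finset.sum_neg_distrib, ← Finset.mul_sum]
    -- expand Y part
    have hb2 : ∀ i, γ i * (a i * Z ω + Nw ω i) = Z ω * (γ i * a i) + γ i * Nw ω i := by
      intro i; ring
    rw [Finset.sum_congr rfl fun i _ => hb2 i, Finset.sum_add_distrib, ← Finset.mul_sum,
      ← hgadef]
    rw [hsplit fun i => γ i * Nw ω i]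
    -- expand the regression part
    have hb3 : ∀ j : {i : Fin q // i ≠ z},
        (γ j.1 + c * a j.1) * (a j.1 * Z ω + Nw ω j.1)
        = Z ω * (γ j.1 * a j.1) + (c * Z ω) * a j.1 ^ 2 + γ j.1 * Nw ω j.1
          + c * (a j.1 * Nw ω j.1) := by
      intro j; ring
    rw [Finset.sum_congr rfl fun j _ => hb3 j, Finset.sum_add_distrib, Finset.sum_add_distrib,
      Finset.sum_add_distrib, ← Finset.mul_sum, ← Finset.mul_sum, ← Finset.mul_sum,
      ← hsdef]
    have hG2 : ∑ j : {i : Fin q // i ≠ z}, γ j.1 * a j.1 = ga - γ z * a z := by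
      linarith [hga2]
    rw [hG2]
    have hcc : Z ω * (ga) - (Z ω * (ga - γ z * a z) + c * Z ω * s) = c * Z ω := by
      linear_combination (-(Z ω)) * hc'
    linarith [hcc]
  -- main computation
  have hmain : ∫ ω, RX ω * RY ω ∂P = c := by
    rw [hRXe, hRYe]
    simp only []
    rw [integral_combo_diag P e he g hG]
    rw [Fintype.sum_sum_type, Fin.sum_univ_three]
    simp only [hcRXcdef, hcRYcdef, hgdef, Sum.elim_inl, Sum.elim_inr, Matrix.cons_val_zero,
      Matrix.cons_val_one, Matrix.head_cons, Matrix.cons_val_two, Matrix.tail_cons]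
    rw [hsplit fun i => (if i = z then 0 else -(a i / (1 + s)))
      * (if i = z then γ z else -(c * a i)) * 1]
    simp only [eq_self_iff_true, if_true, zero_mul]
    have hb : ∀ j : {i : Fin q // i ≠ z},
        (if j.1 = z then 0 else -(a j.1 / (1 + s)))
          * (if j.1 = z then γ z else -(c * a j.1)) * 1
        = (c * (1 / (1 + s))) * a j.1 ^ 2 := by
      intro j; rw [if_neg j.2, if_neg j.2]; field_simp
    rw [Finset.sum_congr rfl fun j _ => hb j, ← Finset.mul_sum, ← hsdef]
    have : c * (1 / (1 + s)) * s + 1 / (1 + s) * c * 1 = c := by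
      field_simp
      ring
    linarith [this]
  constructor
  · rw [hmain, hcdef]
  · intro hne
    rw [hmain, hcdef]
    exact div_ne_zero hne h1s
end

section
/- Let q ≥ 2, a ∈ ℝ^q, κ ≥ 0, and let S_1,…,S_m be nonempty subsets of {2,…,q} with ⋃_{j=1}^m S_j = {2,…,q} and S_i ∩ S_j = ∅ for i ≠ j. Then (1/m) ∑_{j=1}^m ‖a_{S_j^c}‖² / (1 + κ + ‖a_{S_j}‖²)² ≤ ((m−1) ‖a‖² + a_1²) / (m (1 + κ)²), where S_j^c = {1,…,q} \ S_j. Consequently, for a family indexed by q in which ‖a‖² = o(q), the left-hand side is o(q) as q → ∞. -/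
open Matrix Filter

lemma aux14 (q m : ℕ) (hm : 1 ≤ m) (z : Fin q)
    (a : Fin q → ℝ) (κ : ℝ) (hκ : 0 ≤ κ)
    (S : Fin m → Finset (Fin q))
    (hdisj : ∀ i j, i ≠ j → Disjoint (S i) (S j))
    (hcov : Finset.univ.biUnion S = Finset.univ.erase z) :
    (m : ℝ)⁻¹ * ∑ j, (∑ k ∈ (S j)ᶜ, a k ^ 2) / (1 + κ + ∑ k ∈ S j, a k ^ 2) ^ 2
      ≤ (((m : ℝ) - 1) * (∑ k, a k ^ 2) + a z ^ 2) / (m * (1 + κ) ^ 2) := by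
  have hm0 : (0:ℝ) < m := by exact_mod_cast hm
  have h1κ : (0:ℝ) < 1 + κ := by linarith
  have hT : ∀ j : Fin m, (0:ℝ) ≤ ∑ k ∈ S j, a k ^ 2 := fun j =>
    Finset.sum_nonneg fun k _ => sq_nonneg _
  have hterm : ∀ j : Fin m,
      (∑ k ∈ (S j)ᶜ, a k ^ 2) / (1 + κ + ∑ k ∈ S j, a k ^ 2) ^ 2
        ≤ (∑ k ∈ (S j)ᶜ, a k ^ 2) / (1 + κ) ^ 2 := by
    intro j
    apply div_le_div_of_nonneg_left (Finset.sum_nonneg fun k _ => sq_nonneg _)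
      (by positivity)
    apply pow_le_pow_left₀ h1κ.le (by linarith [hT j])
  have hsumS : ∑ j, ∑ k ∈ S j, a k ^ 2 = (∑ k, a k ^ 2) - a z ^ 2 := by
    rw [← Finset.sum_biUnion (fun i _ j _ hij => hdisj i j hij), hcov,
      Finset.sum_erase_eq_sub (Finset.mem_univ z)]
  have hcompl : ∀ j : Fin m, ∑ k ∈ (S j)ᶜ, a k ^ 2 = (∑ k, a k ^ 2) - ∑ k ∈ S j, a k ^ 2 := by
    intro j
    rw [eq_sub_iff_add_eq, Finset.sum_compl_add_sum]
  calc (m : ℝ)⁻¹ * ∑ j, (∑ k ∈ (S j)ᶜ, a k ^ 2) / (1 + κ + ∑ k ∈ S j, a k ^ 2) ^ 2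
      ≤ (m : ℝ)⁻¹ * ∑ j, (∑ k ∈ (S j)ᶜ, a k ^ 2) / (1 + κ) ^ 2 := by
        apply mul_le_mul_of_nonneg_left (Finset.sum_le_sum fun j _ => hterm j)
          (by positivity)
    _ = (((m : ℝ) - 1) * (∑ k, a k ^ 2) + a z ^ 2) / (m * (1 + κ) ^ 2) := by
        rw [← Finset.sum_div]
        have : ∑ j, ∑ k ∈ (S j)ᶜ, a k ^ 2
            = ((m : ℝ) - 1) * (∑ k, a k ^ 2) + a z ^ 2 := by
          simp only [hcompl, Finset.sum_sub_distrib, hsumS, Finset.sum_const,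
            Finset.card_univ, Fintype.card_fin, nsmul_eq_mul]
          ring
        rw [this]
        field_simp
  
/-- if `S_1, …, S_m` is a partition of `{2, …, q}` (the index `z` of the hidden
confounder being excluded) into nonempty disjoint subsets, then
`(1/m) ∑_j ‖a_{S_jᶜ}‖²/(1 + κ + ‖a_{S_j}‖²)² ≤ ((m-1)‖a‖² + a_1²)/(m(1+κ)²)`; consequently,
for a family indexed by `q` with `‖a‖² = o(q)`, the left-hand side is `o(q)` as `q → ∞`. -/
theorem stmt_14 :
    (∀ (q m : ℕ), 2 ≤ q → 1 ≤ m → ∀ (z : Fin q), (z : ℕ) = 0 →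
      ∀ (a : Fin q → ℝ) (κ : ℝ), 0 ≤ κ →
      ∀ S : Fin m → Finset (Fin q),
        (∀ j, (S j).Nonempty) →
        (∀ j, z ∉ S j) →
        (∀ i j, i ≠ j → Disjoint (S i) (S j)) →
        Finset.univ.biUnion S = Finset.univ.erase z →
        (m : ℝ)⁻¹ * ∑ j, (∑ k ∈ (S j)ᶜ, a k ^ 2) / (1 + κ + ∑ k ∈ S j, a k ^ 2) ^ 2
          ≤ (((m : ℝ) - 1) * (∑ k, a k ^ 2) + a z ^ 2) / (m * (1 + κ) ^ 2))
    ∧ (∀ (κ : ℝ), 0 ≤ κ → ∀ (m : ℕ → ℕ), (∀ q, 1 ≤ m q) →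
        ∀ (a : (q : ℕ) → Fin q → ℝ) (S : (q : ℕ) → Fin (m q) → Finset (Fin q)),
        (∀ (q : ℕ) (hq : 2 ≤ q),
          (∀ j, (S q j).Nonempty) ∧
          (∀ j, (⟨0, by omega⟩ : Fin q) ∉ S q j) ∧
          (∀ i j, i ≠ j → Disjoint (S q i) (S q j)) ∧
          Finset.univ.biUnion (S q) = Finset.univ.erase (⟨0, by omega⟩ : Fin q)) →
        Tendsto (fun q : ℕ => (∑ k, a q k ^ 2) / q) atTop (nhds 0) →
        Tendsto (fun q : ℕ =>
          ((m q : ℝ)⁻¹ * ∑ j, (∑ k ∈ (S q j)ᶜ, a q k ^ 2) /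
            (1 + κ + ∑ k ∈ S q j, a q k ^ 2) ^ 2) / q) atTop (nhds 0)) := by
  constructor
  · intro q m hq hm z hz a κ hκ S _ _ hdisj hcov
    exact aux14 q m hm z a κ hκ S hdisj hcov
  · intro κ hκ m hm a S hS hlim
    have h1κ : (0:ℝ) < 1 + κ := by linarith
    have hub : Tendsto (fun q : ℕ => ((∑ k, a q k ^ 2) / q) / (1 + κ) ^ 2)
        atTop (nhds 0) := by
      simpa using hlim.div_const ((1 + κ) ^ 2)
    apply tendsto_of_tendsto_of_tendsto_of_le_of_le' tendsto_const_nhds hub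
    · filter_upwards with q
      apply div_nonneg _ (Nat.cast_nonneg q)
      apply mul_nonneg (by positivity)
      exact Finset.sum_nonneg fun j _ => div_nonneg
        (Finset.sum_nonneg fun k _ => sq_nonneg _) (sq_nonneg _)
    · filter_upwards [eventually_ge_atTop 2] with q hq
      obtain ⟨h1, h2, h3, h4⟩ := hS q hq
      have key := aux14 q (m q) (hm q) ⟨0, by omega⟩ (a q) κ hκ (S q) h3 h4
      have hmq : (0:ℝ) < m q := by exact_mod_cast hm q
      have haz : a q ⟨0, by omega⟩ ^ 2 ≤ ∑ k, a q k ^ 2 :=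
        Finset.single_le_sum (fun k _ => sq_nonneg (a q k)) (Finset.mem_univ _)
      have hT0 : (0:ℝ) ≤ ∑ k, a q k ^ 2 := Finset.sum_nonneg fun k _ => sq_nonneg _
      have key2 : ((m q : ℝ)⁻¹ * ∑ j, (∑ k ∈ (S q j)ᶜ, a q k ^ 2) /
            (1 + κ + ∑ k ∈ S q j, a q k ^ 2) ^ 2)
          ≤ (∑ k, a q k ^ 2) / (1 + κ) ^ 2 := by
        refine key.trans ?_
        rw [div_le_div_iff₀ (by positivity) (by positivity)]
        have : ((m q : ℝ) - 1) * (∑ k, a q k ^ 2) + a q ⟨0, by omega⟩ ^ 2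
            ≤ (m q : ℝ) * (∑ k, a q k ^ 2) := by nlinarith
        nlinarith [sq_nonneg (1 + κ)]
      have hq0 : (0:ℝ) < q := by positivity
      rw [div_right_comm]
      gcongr
end
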